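/- arXiv:1604.04609 — 9 statements merged into one kernel-verified Lean document; each statement's English description precedes it below -/
import Mathlib

section
/- Let X be a Tychonoff topological space. If the space C_h(X) (the continuous real-valued functions on X with the open-point topology) is separable, then every nonempty open subset of X has cardinality at least the continuum 𝔠; in particular the dispersion character Δ(X) ≥ 𝔠. -/
open TopologicalSpace Set Topology

/-- The point-open topology `p` on `C(X, ℝ)`. -/
def pointOpenTopology (X : Type*) [TopologicalSpace X] : TopologicalSpace C(X, ℝ) :=
  generateFrom {S | ∃ (x : X) (U : Set ℝ), IsOpen U ∧ S = {f : C(X, ℝ) | f x ∈ U}}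

/-- The open-point topology `h` on `C(X, ℝ)`. -/
def openPointTopology (X : Type*) [TopologicalSpace X] : TopologicalSpace C(X, ℝ) :=
  generateFrom {S | ∃ (V : Set X) (r : ℝ), IsOpen V ∧ S = {f : C(X, ℝ) | ∃ x ∈ V, f x = r}}

/-- The bi-point-open topology `ph` on `C(X, ℝ)`: generated by both kinds of subbasic sets. -/
def biPointOpenTopology (X : Type*) [TopologicalSpace X] : TopologicalSpace C(X, ℝ) :=
  generateFrom
    ({S | ∃ (x : X) (U : Set ℝ), IsOpen U ∧ S = {f : C(X, ℝ) | f x ∈ U}} ∪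
     {S | ∃ (V : Set X) (r : ℝ), IsOpen V ∧ S = {f : C(X, ℝ) | ∃ x ∈ V, f x = r}})

/-- The dispersion character: minimum cardinality of a nonempty open subset. -/
noncomputable def dispersionCharacter (X : Type*) [TopologicalSpace X] : Cardinal :=
  sInf {c | ∃ U : Set X, IsOpen U ∧ U.Nonempty ∧ c = Cardinal.mk U}

/-- A π-network: a family of nonempty subsets such that every nonempty open set contains one. -/
def IsPiNetwork {X : Type*} [TopologicalSpace X] (γ : Set (Set X)) : Prop :=
  (∀ A ∈ γ, A.Nonempty) ∧ ∀ U : Set X, IsOpen U → U.Nonempty → ∃ A ∈ γ, A ⊆ U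

/-- A π-base: a family of nonempty open subsets such that every nonempty open set contains one. -/
def IsPiBase {X : Type*} [TopologicalSpace X] (γ : Set (Set X)) : Prop :=
  (∀ A ∈ γ, IsOpen A ∧ A.Nonempty) ∧ ∀ U : Set X, IsOpen U → U.Nonempty → ∃ A ∈ γ, A ⊆ U

/-- A network. -/
def IsNetwork {X : Type*} [TopologicalSpace X] (𝒩 : Set (Set X)) : Prop :=
  ∀ (x : X) (U : Set X), IsOpen U → x ∈ U → ∃ N ∈ 𝒩, x ∈ N ∧ N ⊆ U

/-- An 𝓘-set. -/
def IsISet {X : Type*} [TopologicalSpace X] (A : Set X) : Prop :=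
  ∃ (f : X → ℝ) (a b : ℝ), Continuous f ∧ a < b ∧ Icc a b ⊆ f '' A

/-- A T₀-separating family. -/
def T0Separating {X : Type*} (γ : Set (Set X)) : Prop :=
  ∀ x y : X, x ≠ y → ∃ V ∈ γ, (x ∈ V ∧ y ∉ V) ∨ (y ∈ V ∧ x ∉ V)

/-- A zero-set. -/
def IsZeroSet {X : Type*} [TopologicalSpace X] (Z : Set X) : Prop :=
  ∃ f : X → ℝ, Continuous f ∧ Z = f ⁻¹' {0}

/-- Separable submetrizable: admits a coarser separable metrizable topology. -/
def SeparableSubmetrizable (X : Type*) [t : TopologicalSpace X] : Prop :=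
  ∃ t' : TopologicalSpace X, (∀ U : Set X, IsOpen[t'] U → IsOpen[t] U) ∧
    @SeparableSpace X t' ∧ @MetrizableSpace X t'

/-- Hypothesis (M). -/
def HypothesisM : Prop :=
  ∀ A : Set ℝ, Cardinal.mk A = Cardinal.continuum →
    ∃ f : A → ℝ, Continuous f ∧ Set.range f = Icc (0 : ℝ) 1

/-- If `C_h(X)` is separable for a Tychonoff space `X`, then every nonempty
open subset of `X` has cardinality at least the continuum; in particular `Δ(X) ≥ 𝔠`. -/
theorem stmt0 {X : Type*} [TopologicalSpace X] [T35Space X]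
    (hsep : @SeparableSpace C(X, ℝ) (openPointTopology X)) :
    (∀ U : Set X, IsOpen U → U.Nonempty → Cardinal.continuum ≤ Cardinal.mk U) ∧
      (Nonempty X → Cardinal.continuum ≤ dispersionCharacter X) := by
  have main : ∀ U : Set X, IsOpen U → U.Nonempty → Cardinal.continuum ≤ Cardinal.mk U := by
    intro U hU hne
    obtain ⟨D, hDc, hDd⟩ := @TopologicalSpace.exists_countable_dense _ (openPointTopology X) hsep
    have key : ∀ r : ℝ, ∃ p : D × U, (p.1 : C(X, ℝ)) p.2 = r := by
      intro r
      have hopen : IsOpen[openPointTopology X] {f : C(X, ℝ) | ∃ x ∈ U, f x = r} :=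
        TopologicalSpace.isOpen_generateFrom_of_mem ⟨U, r, hU, rfl⟩
      have hnonempty : ({f : C(X, ℝ) | ∃ x ∈ U, f x = r}).Nonempty := by
        obtain ⟨x, hx⟩ := hne
        exact ⟨ContinuousMap.const X r, x, hx, rfl⟩
      obtain ⟨f, hf1, hf2⟩ := @Dense.inter_open_nonempty C(X, ℝ) (openPointTopology X) D hDd _ hopen hnonempty
      obtain ⟨x, hx, hfx⟩ := hf1
      exact ⟨⟨⟨f, hf2⟩, ⟨x, hx⟩⟩, hfx⟩
    choose F hF using key
    have hFinj : Function.Injective F := by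
      intro r s h
      rw [← hF r, ← hF s, h]
    have h1 : Cardinal.lift.{_} (Cardinal.mk ℝ) ≤ Cardinal.lift.{0} (Cardinal.mk (↥D × ↥U)) :=
      Cardinal.lift_mk_le'.2 ⟨⟨F, hFinj⟩⟩
    rw [Cardinal.mk_real, Cardinal.lift_continuum, Cardinal.lift_uzero,
      Cardinal.mk_prod, Cardinal.lift_id, Cardinal.lift_id] at h1
    have h2 : Cardinal.mk ↥D * Cardinal.mk ↥U ≤ Cardinal.aleph0 * Cardinal.mk ↥U :=
      mul_le_mul_left (Cardinal.mk_le_aleph0_iff.2 hDc) _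
    have h3 : Cardinal.continuum ≤ Cardinal.aleph0 * Cardinal.mk ↥U := h1.trans h2
    have h4 := h3.trans (Cardinal.mul_le_max _ _)
    rcases le_sup_iff.1 h4 with h5 | h5
    · rcases le_sup_iff.1 h5 with h6 | h6
      · exact absurd h6 (not_le.2 Cardinal.aleph0_lt_continuum)
      · exact h6
    · exact absurd h5 (not_le.2 Cardinal.aleph0_lt_continuum)
  refine ⟨main, fun hX => ?_⟩
  apply le_csInf
  · exact ⟨Cardinal.mk (Set.univ : Set X), Set.univ, isOpen_univ, Set.univ_nonempty, rfl⟩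
  · rintro c ⟨V, hV, hVne, rfl⟩
    exact main V hV hVne
end

section
/- Let X be a nonempty Tychonoff topological space. If C_ph(X) is separable, then X admits a coarser separable metrizable topology (X is separable submetrizable) and the dispersion character of X equals the continuum: Δ(X) = 𝔠. -/
open TopologicalSpace Set Topology

/-- For nonempty Tychonoff `X`, separability of `C_ph(X)` implies `X` is
separable submetrizable and `Δ(X) = 𝔠`. -/
theorem stmt2 {X : Type*} [TopologicalSpace X] [T35Space X] [Nonempty X]
    (hsep : @SeparableSpace C(X, ℝ) (biPointOpenTopology X)) :
    SeparableSubmetrizable X ∧ dispersionCharacter X = Cardinal.continuum := by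
  classical
  letI : TopologicalSpace C(X, ℝ) := biPointOpenTopology X
  obtain ⟨S, hScount, hSdense⟩ := hsep.exists_countable_dense
  -- subbasic sets are open in the bi-point-open topology
  have hopen_p : ∀ (x : X) (U : Set ℝ), IsOpen U →
      IsOpen {f : C(X, ℝ) | f x ∈ U} := fun x U hU =>
    TopologicalSpace.isOpen_generateFrom_of_mem (Or.inl ⟨x, U, hU, rfl⟩)
  have hopen_h : ∀ (V : Set X) (r : ℝ), IsOpen V →
      IsOpen {f : C(X, ℝ) | ∃ x ∈ V, f x = r} := fun V r hV =>
    TopologicalSpace.isOpen_generateFrom_of_mem (Or.inr ⟨V, r, hV, rfl⟩)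
  have hmeet : ∀ T : Set C(X, ℝ), IsOpen T → T.Nonempty →
      (T ∩ S).Nonempty := fun T hT hTne => hSdense.inter_open_nonempty T hT hTne
  -- S separates points of X
  have hsepf : ∀ x y : X, x ≠ y → ∃ f ∈ S, (f : C(X, ℝ)) x ≠ f y := by
    intro x y hxy
    obtain ⟨f, hfc, hfxy⟩ := separatesPoints_continuous_of_t35Space hxy
    set a := f x with ha
    set b := f y with hb
    have hd : 0 < dist a b := dist_pos.mpr hfxy
    set T : Set C(X, ℝ) :=
      {g : C(X, ℝ) | g x ∈ Metric.ball a (dist a b / 2)} ∩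
      {g : C(X, ℝ) | g y ∈ Metric.ball b (dist a b / 2)} with hT
    have hTopen : IsOpen T :=
      (hopen_p x _ Metric.isOpen_ball).inter (hopen_p y _ Metric.isOpen_ball)
    have hTne : T.Nonempty := by
      refine ⟨⟨f, hfc⟩, ?_, ?_⟩ <;> simp [Metric.mem_ball, hfxy] <;>
        simp only [← ha, ← hb, dist_self] <;> linarith
    obtain ⟨g, ⟨hg1, hg2⟩, hgS⟩ := hmeet T hTopen hTne
    refine ⟨g, hgS, fun hEq => ?_⟩
    have hga : dist a (g x) < dist a b / 2 := by rw [dist_comm]; exact hg1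
    have hgb : dist (g x) b < dist a b / 2 := by rw [hEq]; exact hg2
    have : dist a b < dist a b := by
      calc dist a b ≤ dist a (g x) + dist (g x) b := dist_triangle _ _ _
        _ < dist a b / 2 + dist a b / 2 := add_lt_add hga hgb
        _ = dist a b := by ring
    exact absurd this (lt_irrefl _)
  -- every nonempty open set realizes every real value through some member of S
  have hfill : ∀ (U : Set X), IsOpen U → U.Nonempty → ∀ r : ℝ,
      ∃ f ∈ S, ∃ x ∈ U, (f : C(X, ℝ)) x = r := by
    intro U hU hUne r
    obtain ⟨x0, hx0⟩ := hUne
    have hTne : ({f : C(X, ℝ) | ∃ x ∈ U, f x = r}).Nonempty :=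
      ⟨ContinuousMap.const X r, ⟨x0, hx0, rfl⟩⟩
    obtain ⟨g, hgT, hgS⟩ := hmeet _ (hopen_h U r hU) hTne
    exact ⟨g, hgS, hgT⟩
  -- enumerate S
  have hSne : S.Nonempty := by
    have : Nonempty C(X, ℝ) := ⟨ContinuousMap.const X 0⟩
    exact hSdense.nonempty
  obtain ⟨F, hF⟩ := hScount.exists_eq_range hSne
  -- the evaluation map
  have hEinj : Function.Injective (fun (x : X) (n : ℕ) => F n x) := by
    intro x y hxy
    by_contra hne
    obtain ⟨f, hfS, hfneq⟩ := hsepf x y hne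
    rw [hF] at hfS
    obtain ⟨n, rfl⟩ := hfS
    exact hfneq (congrFun hxy n)
  have hEcont : Continuous (fun (x : X) (n : ℕ) => F n x) :=
    continuous_pi fun n => (F n).continuous
  constructor
  · refine ⟨TopologicalSpace.induced (fun (x : X) (n : ℕ) => F n x) inferInstance,
      ?_, ?_, ?_⟩
    · intro U hU
      exact hU.mono (continuous_iff_le_induced.mp hEcont)
    · letI := TopologicalSpace.induced (fun (x : X) (n : ℕ) => F n x)
        (inferInstance : TopologicalSpace (ℕ → ℝ))
      haveI : SecondCountableTopology X :=
        (Topology.IsInducing.secondCountableTopology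
          (f := fun (x : X) (n : ℕ) => F n x) ⟨rfl⟩)
      infer_instance
    · letI := TopologicalSpace.induced (fun (x : X) (n : ℕ) => F n x)
        (inferInstance : TopologicalSpace (ℕ → ℝ))
      exact Topology.IsEmbedding.metrizableSpace
        (f := fun (x : X) (n : ℕ) => F n x) ⟨⟨rfl⟩, hEinj⟩
  · -- dispersion character
    have hXle : Cardinal.mk X ≤ Cardinal.continuum := by
      have h1 : Cardinal.lift.{0} (Cardinal.mk X) ≤ Cardinal.lift (Cardinal.mk (ℕ → ℝ)) :=
        Cardinal.lift_mk_le'.mpr ⟨⟨fun x n => F n x, hEinj⟩⟩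
      have h2 : Cardinal.mk (ℕ → ℝ) = Cardinal.continuum := by
        rw [← Cardinal.power_def, Cardinal.mk_real, Cardinal.mk_nat,
          Cardinal.continuum_power_aleph0]
      rw [h2, Cardinal.lift_continuum, Cardinal.lift_uzero] at h1
      exact h1
    have hmemK : Cardinal.mk (univ : Set X) ∈
        {c | ∃ U : Set X, IsOpen U ∧ U.Nonempty ∧ c = Cardinal.mk U} :=
      ⟨univ, isOpen_univ, univ_nonempty, rfl⟩
    have hlow : ∀ c ∈ {c | ∃ U : Set X, IsOpen U ∧ U.Nonempty ∧ c = Cardinal.mk U},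
        Cardinal.continuum ≤ c := by
      rintro c ⟨U, hU, hUne, rfl⟩
      have hφsurj : Function.Surjective (fun (p : ℕ × U) => F p.1 p.2.1) := by
        intro r
        obtain ⟨f, hfS, x, hxU, hfx⟩ := hfill U hU hUne r
        rw [hF] at hfS
        obtain ⟨n, rfl⟩ := hfS
        exact ⟨⟨n, ⟨x, hxU⟩⟩, hfx⟩
      have h1 : Cardinal.lift.{u_1} (Cardinal.mk ℝ) ≤ Cardinal.lift.{0} (Cardinal.mk (ℕ × U)) :=
        Cardinal.lift_mk_le'.mpr ⟨Function.Embedding.ofSurjective _ hφsurj⟩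
      have h2 : Cardinal.mk (ℕ × U) = Cardinal.aleph0 * Cardinal.mk U := by
        rw [Cardinal.mk_prod, Cardinal.mk_nat, Cardinal.lift_aleph0, Cardinal.lift_uzero]
      rw [Cardinal.mk_real, Cardinal.lift_continuum, h2, Cardinal.lift_uzero] at h1
      have h3 : Cardinal.continuum ≤ max (max Cardinal.aleph0 (Cardinal.mk U))
          Cardinal.aleph0 := h1.trans (Cardinal.mul_le_max _ _)
      rcases le_max_iff.mp h3 with h | h
      · rcases le_max_iff.mp h with h' | h'
        · exact absurd h' (not_le.mpr Cardinal.aleph0_lt_continuum)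
        · exact h'
      · exact absurd h (not_le.mpr Cardinal.aleph0_lt_continuum)
    refine le_antisymm ?_ ?_
    · calc dispersionCharacter X ≤ Cardinal.mk (univ : Set X) := csInf_le' hmemK
        _ = Cardinal.mk X := Cardinal.mk_univ
        _ ≤ Cardinal.continuum := hXle
    · exact le_csInf ⟨_, hmemK⟩ hlow
end

section
/- Let X be a Tychonoff space possessing a π-network consisting of nontrivial connected sets. Then the following are equivalent: (1) C_ph(X) is separable; (2) X has a countable T₀-separating family of zero-sets; (3) X is separable submetrizable. -/
open TopologicalSpace Set Topology

lemma dense_of_finite_sInter {α : Type*} {S : Set (Set α)} {D : Set α}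
    (h : ∀ F : Finset (Set α), ↑F ⊆ S → (⋂₀ (F : Set (Set α))).Nonempty →
      (D ∩ ⋂₀ (F : Set (Set α))).Nonempty) :
    @Dense α (generateFrom S) D := by
  letI : TopologicalSpace α := generateFrom S
  have hb := TopologicalSpace.isTopologicalBasis_of_subbasis (t := generateFrom S) (s := S) rfl
  rw [hb.dense_iff]
  rintro o ⟨f, ⟨hf, hfS⟩, rfl⟩ hne
  have := h hf.toFinset (by simpa using hfS)
    (by rwa [Set.Finite.coe_toFinset])
  rw [Set.Finite.coe_toFinset] at this
  rw [Set.inter_comm]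
  exact this


lemma key_approx (Y : Type*) [MetricSpace Y] [SeparableSpace Y] :
    ∃ D : Set (Y → ℝ), D.Countable ∧ (∀ g ∈ D, Continuous g) ∧
      ∀ (T : Finset Y) (c : Y → ℝ) (ε : ℝ), 0 < ε →
        ∃ g ∈ D, ∀ w ∈ T, |g w - c w| < ε := by
  classical
  obtain ⟨Q, hQc, hQd⟩ := TopologicalSpace.exists_countable_dense Y
  haveI := hQc.to_subtype
  set mk : ((Σ n : ℕ, (Fin n → ℚ × Q)) × ℚ) → (Y → ℝ) := fun p => fun y =>
    ∑ i, ((p.1.2 i).1 : ℝ) * max 0 (1 - dist y ((p.1.2 i).2 : Y) / (p.2 : ℝ)) with hmk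
  refine ⟨Set.range mk, Set.countable_range _, ?_, ?_⟩
  · rintro g ⟨p, rfl⟩
    apply continuous_finset_sum
    intro i _
    exact continuous_const.mul (continuous_const.max
      (continuous_const.sub ((continuous_id.dist continuous_const).div_const _)))
  · intro T c ε hε
    -- rational targets
    have hc' : ∀ w : Y, ∃ q : ℚ, |c w - (q : ℝ)| < ε / 2 :=
      fun w => exists_rat_near _ (by positivity)
    choose c' hc' using hc'
    -- bound M
    set M : ℝ := ∑ w ∈ T, |(c' w : ℝ)| with hM
    have hM0 : 0 ≤ M := Finset.sum_nonneg fun w _ => abs_nonneg _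
    have hMb : ∀ w ∈ T, |(c' w : ℝ)| ≤ M := fun w hw =>
      Finset.single_le_sum (fun w _ => abs_nonneg ((c' w : ℝ))) hw
    -- separation δ
    have hδ : ∃ δ : ℝ, 0 < δ ∧ ∀ w ∈ T, ∀ v ∈ T, w ≠ v → δ ≤ dist w v := by
      by_cases hP : (T.offDiag).Nonempty
      · refine ⟨T.offDiag.inf' hP (fun p => dist p.1 p.2), ?_, ?_⟩
        · refine (Finset.lt_inf'_iff hP).mpr ?_
          rintro ⟨w, v⟩ hp
          rw [Finset.mem_offDiag] at hp
          exact dist_pos.mpr hp.2.2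
        · intro w hw v hv hne
          exact Finset.inf'_le _ ((Finset.mem_offDiag (x := (w,v))).mpr ⟨hw, hv, hne⟩)
      · exact ⟨1, one_pos, fun w hw v hv hne =>
          absurd ⟨(w, v), (Finset.mem_offDiag (x := (w,v))).mpr ⟨hw, hv, hne⟩⟩ hP⟩
    obtain ⟨δ, hδ0, hδle⟩ := hδ
    obtain ⟨ρ, hρ0, hρδ⟩ := exists_rat_btwn (by positivity : (0:ℝ) < δ / 3)
    set η : ℝ := (ρ : ℝ) * min 1 ((ε / 2) / (M + 1)) with hη
    have hρpos : (0:ℝ) < ρ := hρ0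
    have hη0 : 0 < η := by
      apply mul_pos hρpos
      apply lt_min one_pos
      positivity
    have hηρ : η ≤ (ρ : ℝ) := by
      rw [hη]
      nlinarith [min_le_left (1:ℝ) ((ε / 2) / (M + 1))]
    -- choose nearby points of Q
    have hq : ∀ w : {x // x ∈ T}, ∃ p : Q, dist (w : Y) (p : Y) < η := by
      intro w
      obtain ⟨p, hp1, hp2⟩ := Metric.dense_iff.1 hQd (w : Y) η hη0
      exact ⟨⟨p, hp2⟩, by rwa [dist_comm, ← Metric.mem_ball]⟩
    choose qf hqf using hq
    set n := T.card
    set e : {x // x ∈ T} ≃ Fin n := T.equivFin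
    set p : ((Σ n : ℕ, (Fin n → ℚ × Q)) × ℚ) :=
      ⟨⟨n, fun i => (c' (e.symm i : Y), qf (e.symm i))⟩, ρ⟩ with hp
    refine ⟨mk p, ⟨p, rfl⟩, ?_⟩
    intro w hw
    set w' : {x // x ∈ T} := ⟨w, hw⟩
    set i₀ := e w'
    have hgw : mk p w = (c' w : ℝ) * max 0 (1 - dist w (qf w' : Y) / (ρ : ℝ)) := by
      rw [hmk]
      simp only
      rw [Finset.sum_eq_single i₀]
      · simp [hp, i₀, p, w']
      · intro i _ hi
        have hne : (e.symm i : Y) ≠ w := by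
          intro hEq
          apply hi
          have h5 : e.symm i = w' := Subtype.ext hEq
          simpa [i₀] using congrArg e h5
        have hdist : (ρ : ℝ) ≤ dist w ((qf (e.symm i)) : Y) := by
          have h1 : δ ≤ dist w (e.symm i : Y) := hδle w hw _ (e.symm i).2 (Ne.symm hne)
          have h2 : dist (e.symm i : Y) ((qf (e.symm i)) : Y) < η := hqf _
          have := dist_triangle w ((qf (e.symm i)) : Y) (e.symm i : Y)
          rw [dist_comm ((qf (e.symm i)) : Y) (e.symm i : Y)] at this
          nlinarith
        have : 1 - dist w ((qf (e.symm i)) : Y) / (ρ : ℝ) ≤ 0 := by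
          rw [sub_nonpos, le_div_iff₀ hρpos]
          linarith
        simp [hp, p, max_eq_left this, sub_nonpos.mp this]
      · intro h
        exact absurd (Finset.mem_univ i₀) h
    have hd : dist w (qf w' : Y) < η := hqf w'
    have hd0 : 0 ≤ dist w (qf w' : Y) := dist_nonneg
    have hmax : max 0 (1 - dist w (qf w' : Y) / (ρ : ℝ)) = 1 - dist w (qf w' : Y) / (ρ : ℝ) := by
      apply max_eq_right
      rw [sub_nonneg, div_le_one hρpos]
      linarith
    rw [hgw, hmax]
    have key : |(c' w : ℝ) * (1 - dist w (qf w' : Y) / (ρ : ℝ)) - (c' w : ℝ)| < ε / 2 := by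
      have : (c' w : ℝ) * (1 - dist w (qf w' : Y) / (ρ : ℝ)) - (c' w : ℝ)
          = -((c' w : ℝ) * (dist w (qf w' : Y) / (ρ : ℝ))) := by ring
      rw [this, abs_neg, abs_mul]
      have h1 : |dist w (qf w' : Y) / (ρ : ℝ)| = dist w (qf w' : Y) / (ρ : ℝ) :=
        abs_of_nonneg (by positivity)
      rw [h1]
      have hcwM : |(c' w : ℝ)| ≤ M := hMb w hw
      have hdη : dist w (qf w' : Y) / (ρ : ℝ) ≤ η / (ρ : ℝ) := by
        gcongr
      have hηρ2 : η / (ρ : ℝ) = min 1 ((ε / 2) / (M + 1)) := by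
        rw [hη]; field_simp
      have h3 : η / (ρ : ℝ) ≤ (ε / 2) / (M + 1) := by
        rw [hηρ2]; exact min_le_right _ _
      calc |(c' w : ℝ)| * (dist w (qf w' : Y) / (ρ : ℝ))
          ≤ M * ((ε / 2) / (M + 1)) := by
            apply mul_le_mul hcwM (le_trans hdη h3) (by positivity) hM0
        _ < (M + 1) * ((ε / 2) / (M + 1)) := by
            have hpos : (0:ℝ) < ε / 2 / (M + 1) := by positivity
            nlinarith
        _ = ε / 2 := by field_simp
    calc |(c' w : ℝ) * (1 - dist w (qf w' : Y) / (ρ : ℝ)) - c w|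
        ≤ |(c' w : ℝ) * (1 - dist w (qf w' : Y) / (ρ : ℝ)) - (c' w : ℝ)| + |(c' w : ℝ) - c w| := by
          exact abs_sub_le _ _ _
      _ < ε / 2 + ε / 2 := by
          apply add_lt_add key
          rw [abs_sub_comm]
          exact hc' w
      _ = ε := by ring


lemma exists_eps_forall {β : Type*} (F : Finset β) (p : β → ℝ → Prop)
    (hmono : ∀ b ε ε', 0 < ε' → ε' ≤ ε → p b ε → p b ε')
    (h : ∀ b ∈ F, ∃ ε, 0 < ε ∧ p b ε) : ∃ ε, 0 < ε ∧ ∀ b ∈ F, p b ε := by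
  classical
  induction F using Finset.induction_on with
  | empty => exact ⟨1, one_pos, by simp⟩
  | insert a s hb ih =>
    obtain ⟨ε, hε, hεp⟩ := ih (fun b hbs => h b (Finset.mem_insert_of_mem hbs))
    obtain ⟨ε', hε', hε'p⟩ := h a (Finset.mem_insert_self a s)
    refine ⟨min ε ε', lt_min hε hε', ?_⟩
    intro b hbmem
    rcases Finset.mem_insert.mp hbmem with rfl | hbs
    · exact hmono b ε' (min ε ε') (lt_min hε hε') (min_le_right _ _) hε'p
    · exact hmono b ε (min ε ε') (lt_min hε hε') (min_le_left _ _) (hεp b hbs)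

lemma exists_pairs {ι β : Type*} [Nonempty β] (J : Finset ι) (A : ι → Set β) (F : Set β)
    (hF : F.Finite) (hA : ∀ j ∈ J, (A j).Infinite) :
    ∃ y : ι → Bool → β, (∀ j ∈ J, ∀ b, y j b ∈ A j ∧ y j b ∉ F) ∧
      (∀ j ∈ J, ∀ k ∈ J, ∀ b c, y j b = y k c → j = k ∧ b = c) := by
  classical
  revert hA
  induction J using Finset.induction_on with
  | empty => exact fun _ => ⟨fun _ _ => Classical.arbitrary β, by simp, by simp⟩
  | insert a J hb ih =>
    intro hA
    obtain ⟨y, hy1, hy2⟩ := ih (fun j hj => hA j (Finset.mem_insert_of_mem hj))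
    set bad : Set β := F ∪ (↑(J.image (fun j => y j true)) ∪ ↑(J.image (fun j => y j false)))
      with hbad
    have hbadF : bad.Finite := hF.union ((J.image _).finite_toSet.union (J.image _).finite_toSet)
    have hinf : (A a \ bad).Infinite := (hA a (Finset.mem_insert_self a J)).diff hbadF
    obtain ⟨p, hp, q, hq, hpq⟩ := hinf.nontrivial
    refine ⟨Function.update y a (fun b => if b then p else q), ?_, ?_⟩
    · intro j hj b
      by_cases hja : j = a
      · subst hja
        rw [Function.update_self]
        cases b <;> simp only [Bool.false_eq_true, if_false, if_true]
        · exact ⟨hq.1, fun h => hq.2 (Or.inl h)⟩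
        · exact ⟨hp.1, fun h => hp.2 (Or.inl h)⟩
      · rcases Finset.mem_insert.mp hj with rfl | hjJ
        · exact absurd rfl hja
        · rw [Function.update_of_ne hja]
          exact hy1 j hjJ b
    · intro j hj k hk b c heq
      by_cases hja : j = a <;> by_cases hka : k = a
      · subst hja; subst hka
        refine ⟨rfl, ?_⟩
        by_contra hbc
        simp only [Function.update_self] at heq
        cases b <;> cases c <;> simp_all
      · subst hja
        rcases Finset.mem_insert.mp hk with h | hkJ
        · exact absurd h hka
        exfalso
        have hykc : y k c ∈ bad := by
          rw [hbad]
          cases c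
          · exact Or.inr (Or.inr (by simpa using ⟨k, hkJ, rfl⟩))
          · exact Or.inr (Or.inl (by simpa using ⟨k, hkJ, rfl⟩))
        rw [Function.update_self, Function.update_of_ne hka] at heq
        cases b <;> simp only [Bool.false_eq_true, if_false, if_true] at heq
        · exact hq.2 (by rw [heq]; exact hykc)
        · exact hp.2 (by rw [heq]; exact hykc)
      · subst hka
        rcases Finset.mem_insert.mp hj with h | hjJ
        · exact absurd h hja
        exfalso
        have hyjb : y j b ∈ bad := by
          rw [hbad]
          cases b
          · exact Or.inr (Or.inr (by simpa using ⟨j, hjJ, rfl⟩))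
          · exact Or.inr (Or.inl (by simpa using ⟨j, hjJ, rfl⟩))
        rw [Function.update_of_ne hja, Function.update_self] at heq
        cases c <;> simp only [Bool.false_eq_true, if_false, if_true] at heq
        · exact hq.2 (by rw [← heq]; exact hyjb)
        · exact hp.2 (by rw [← heq]; exact hyjb)
      · rcases Finset.mem_insert.mp hj with h | hjJ
        · exact absurd h hja
        rcases Finset.mem_insert.mp hk with h | hkJ
        · exact absurd h hka
        rw [Function.update_of_ne hja, Function.update_of_ne hka] at heq
        exact hy2 j hjJ k hkJ b c heq

lemma dense_inter_open {α : Type*} {t : TopologicalSpace α} {D : Set α} (hD : @Dense α t D)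
    {U : Set α} (hU : IsOpen[t] U) (hne : U.Nonempty) : (U ∩ D).Nonempty := by
  letI := t
  exact dense_iff_inter_open.1 hD U hU hne

lemma one_to_two {X : Type*} [TopologicalSpace X] [T35Space X]
    (h : @SeparableSpace C(X, ℝ) (biPointOpenTopology X)) :
    ∃ δ : Set (Set X), δ.Countable ∧ T0Separating δ ∧ ∀ Z ∈ δ, IsZeroSet Z := by
  obtain ⟨D, hDc, hDd⟩ := @TopologicalSpace.exists_countable_dense _ (biPointOpenTopology X) h
  refine ⟨(fun d : C(X, ℝ) => {z | d z ≤ 1/2}) '' D, hDc.image _, ?_, ?_⟩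
  · intro x y hxy
    obtain ⟨f, hf, hf0, hf1⟩ := CompletelyRegularSpace.completely_regular x {y}
      isClosed_singleton (by simpa using hxy)
    set g : C(X, ℝ) := ⟨fun z => (f z : ℝ), continuous_subtype_val.comp hf⟩ with hg
    set O : Set C(X, ℝ) := {h | h x ∈ Iio (1/3 : ℝ)} ∩ {h | h y ∈ Ioi (2/3 : ℝ)} with hO
    have hOopen : IsOpen[biPointOpenTopology X] O :=
      GenerateOpen.inter _ _
        (GenerateOpen.basic _ (Or.inl ⟨x, Iio (1/3 : ℝ), isOpen_Iio, rfl⟩))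
        (GenerateOpen.basic _ (Or.inl ⟨y, Ioi (2/3 : ℝ), isOpen_Ioi, rfl⟩))
    have hOne : O.Nonempty := by
      refine ⟨g, ?_, ?_⟩
      · show g x < 1/3
        rw [hg]
        simp only [ContinuousMap.coe_mk]
        rw [hf0]
        norm_num
      · show g y > 2/3
        rw [hg]
        simp only [ContinuousMap.coe_mk]
        rw [hf1 (mem_singleton y)]
        norm_num
    obtain ⟨d, hdO, hdD⟩ := dense_inter_open hDd hOopen hOne
    refine ⟨{z | d z ≤ 1/2}, ⟨d, hdD, rfl⟩, Or.inl ⟨?_, ?_⟩⟩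
    · have : d x < 1/3 := hdO.1
      show d x ≤ 1/2
      linarith
    · have : d y > 2/3 := hdO.2
      show ¬ d y ≤ 1/2
      push_neg
      linarith
  · rintro Z ⟨d, _, rfl⟩
    refine ⟨fun z => max (d z - 1/2) 0, ((map_continuous d).sub continuous_const).max
      continuous_const, ?_⟩
    ext z
    simp only [mem_setOf_eq, mem_preimage, mem_singleton_iff]
    rw [max_eq_right_iff]
    constructor <;> intro h' <;> linarith

lemma two_to_three {X : Type*} [TopologicalSpace X]
    (h : ∃ δ : Set (Set X), δ.Countable ∧ T0Separating δ ∧ ∀ Z ∈ δ, IsZeroSet Z) :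
    SeparableSubmetrizable X := by
  obtain ⟨δ, hδc, hδt, hδz⟩ := h
  haveI := hδc.to_subtype
  have hch : ∀ Z : δ, ∃ f : X → ℝ, Continuous f ∧ (Z : Set X) = f ⁻¹' {0} :=
    fun Z => hδz Z Z.2
  choose F hFc hFz using hch
  set φ : X → (δ → ℝ) := fun x Z => F Z x with hφ
  have hφcont : Continuous φ := continuous_pi fun Z => hFc Z
  have hφinj : Function.Injective φ := by
    intro x y hxy
    by_contra hne
    obtain ⟨Z, hZδ, hZ⟩ := hδt x y hne
    have hval : F ⟨Z, hZδ⟩ x = F ⟨Z, hZδ⟩ y := congrFun hxy ⟨Z, hZδ⟩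
    have hmem : ∀ w : X, w ∈ Z ↔ F ⟨Z, hZδ⟩ w = 0 :=
      fun w => Set.ext_iff.mp (hFz ⟨Z, hZδ⟩) w
    rcases hZ with ⟨hx, hy⟩ | ⟨hy, hx⟩
    · exact hy ((hmem y).mpr (by rw [← hval]; exact (hmem x).mp hx))
    · exact hx ((hmem x).mpr (by rw [hval]; exact (hmem y).mp hy))
  refine ⟨TopologicalSpace.induced φ inferInstance, ?_, ?_, ?_⟩
  · intro U hU
    obtain ⟨W, hW, rfl⟩ := hU
    exact hW.preimage hφcont
  · have hind : @Topology.IsInducing X (δ → ℝ) (TopologicalSpace.induced φ inferInstance) _ φ :=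
      Topology.IsInducing.induced φ
    have hsc : @SecondCountableTopology X (TopologicalSpace.induced φ inferInstance) :=
      @Topology.IsInducing.secondCountableTopology X (δ → ℝ)
        (TopologicalSpace.induced φ inferInstance) φ _ _ hind
    exact @TopologicalSpace.SecondCountableTopology.to_separableSpace X (TopologicalSpace.induced φ inferInstance) hsc
  · have hemb : @Topology.IsEmbedding X (δ → ℝ) (TopologicalSpace.induced φ inferInstance) _ φ :=
      @Topology.IsEmbedding.mk X (δ → ℝ) (TopologicalSpace.induced φ inferInstance) _ φ
        (Topology.IsInducing.induced φ) hφinj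
    haveI : MetrizableSpace (δ → ℝ) := @UniformSpace.metrizableSpace _ _ _ _
    exact @Topology.IsEmbedding.metrizableSpace X (δ → ℝ)
      (TopologicalSpace.induced φ inferInstance) _ _ _ hemb

lemma submetrizable_approx {X : Type*} [tX : TopologicalSpace X] (h : SeparableSubmetrizable X) :
    ∃ D0 : Set (X → ℝ), D0.Countable ∧ (∀ g ∈ D0, Continuous g) ∧
      ∀ (T : Finset X) (c : X → ℝ) (ε : ℝ), 0 < ε →
        ∃ g ∈ D0, ∀ w ∈ T, |g w - c w| < ε := by
  obtain ⟨t', hcoarser, hsep, hmetr⟩ := h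
  have hsep' : @SeparableSpace X (@UniformSpace.toTopologicalSpace X
      (@TopologicalSpace.metrizableSpaceMetric X t' hmetr).toUniformSpace) := hsep
  obtain ⟨D0, hD0c, hD0cont, hD0approx⟩ :=
    @key_approx X (@TopologicalSpace.metrizableSpaceMetric X t' hmetr) hsep'
  have hle : tX ≤ t' := by
    rw [TopologicalSpace.le_def]
    exact fun U hU => hcoarser U hU
  refine ⟨D0, hD0c, ?_, ?_⟩
  · intro g hg
    have h1 : @Continuous X ℝ t' _ g := hD0cont g hg
    exact continuous_le_dom hle h1
  · intro T c ε hε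
    exact hD0approx T c ε hε

lemma three_to_one {X : Type*} [TopologicalSpace X] [T1Space X]
    (hγ : ∃ γ : Set (Set X), IsPiNetwork γ ∧ ∀ A ∈ γ, IsConnected A ∧ A.Nontrivial)
    (h : SeparableSubmetrizable X) :
    @SeparableSpace C(X, ℝ) (biPointOpenTopology X) := by
  classical
  rcases isEmpty_or_nonempty X with hX | hX
  · -- X empty : C(X, ℝ) is a subsingleton
    set c0 : C(X, ℝ) := ⟨fun _ => 0, continuous_const⟩ with hc0
    have hsub : ∀ f : C(X, ℝ), f = c0 := by
      intro f; ext x; exact (IsEmpty.false x).elim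
    have hdense : @Dense C(X, ℝ) (biPointOpenTopology X) {c0} := by
      intro f
      rw [hsub f]
      exact @subset_closure C(X, ℝ) (biPointOpenTopology X) {c0} c0 rfl
    exact @SeparableSpace.mk C(X, ℝ) (biPointOpenTopology X)
      ⟨{c0}, countable_singleton _, hdense⟩
  obtain ⟨γ, ⟨hγne, hγnet⟩, hγc⟩ := hγ
  obtain ⟨D0, hD0c, hcont, hD0approx⟩ := submetrizable_approx h
  set D : Set C(X, ℝ) := (fun f : C(X, ℝ) => (f : X → ℝ)) ⁻¹' D0 with hD
  refine @SeparableSpace.mk C(X, ℝ) (biPointOpenTopology X)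
    ⟨D, hD0c.preimage DFunLike.coe_injective, ?_⟩
  show @Dense C(X,ℝ) (generateFrom _) D
  apply dense_of_finite_sInter
  intro F hFsub hFne
  obtain ⟨f₀, hf₀⟩ := hFne
  have hf₀' : ∀ S ∈ F, f₀ ∈ S := fun S hS => hf₀ S hS
  set PS : Set (Set C(X,ℝ)) := {S | ∃ (x : X) (U : Set ℝ), IsOpen U ∧ S = {f : C(X, ℝ) | f x ∈ U}}
  set HS : Set (Set C(X,ℝ)) :=
    {S | ∃ (V : Set X) (r : ℝ), IsOpen V ∧ S = {f : C(X, ℝ) | ∃ x ∈ V, f x = r}}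
  set Fp : Finset (Set C(X,ℝ)) := F.filter (fun S => S ∈ PS) with hFp
  set Fh : Finset (Set C(X,ℝ)) := F \ Fp with hFh
  -- choose data for p-members
  have hPd : ∀ S : Set C(X,ℝ), ∃ (x : X) (U : Set ℝ),
      S ∈ Fp → (IsOpen U ∧ S = {f : C(X, ℝ) | f x ∈ U}) := by
    intro S
    by_cases hS : S ∈ Fp
    · obtain ⟨x, U, hU, hSeq⟩ := (Finset.mem_filter.mp hS).2
      exact ⟨x, U, fun _ => ⟨hU, hSeq⟩⟩
    · exact ⟨Classical.arbitrary X, ∅, fun h => absurd h hS⟩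
  choose xP UP hPd using hPd
  -- choose data for h-members
  have hHd : ∀ S : Set C(X,ℝ), ∃ (V : Set X) (r : ℝ),
      S ∈ Fh → (IsOpen V ∧ S = {f : C(X, ℝ) | ∃ x ∈ V, f x = r}) := by
    intro S
    by_cases hS : S ∈ Fh
    · have hSF : S ∈ F := (Finset.mem_sdiff.mp hS).1
      have hSnp : S ∉ Fp := (Finset.mem_sdiff.mp hS).2
      have : S ∈ PS ∪ HS := hFsub hSF
      rcases this with hp | hh
      · exact absurd (Finset.mem_filter.mpr ⟨hSF, hp⟩) hSnp
      · obtain ⟨V, r, hV, hSeq⟩ := hh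
        exact ⟨V, r, fun _ => ⟨hV, hSeq⟩⟩
    · exact ⟨∅, 0, fun h => absurd h hS⟩
  choose VH rH hHd using hHd
  -- the connected sets inside each V
  have hAd : ∀ S : Set C(X,ℝ), ∃ A : Set X,
      S ∈ Fh → (A ⊆ VH S ∧ (A.Infinite) ∧ IsPreconnected A) := by
    intro S
    by_cases hS : S ∈ Fh
    · have hSS := (hHd S hS).2
      have hf₀S : f₀ ∈ S := hf₀' S (Finset.mem_sdiff.mp hS).1
      rw [hSS] at hf₀S
      obtain ⟨x, hxV, _⟩ := hf₀S
      obtain ⟨A, hAγ, hAV⟩ := hγnet (VH S) (hHd S hS).1 ⟨x, hxV⟩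
      obtain ⟨hAconn, hAnt⟩ := hγc A hAγ
      exact ⟨A, fun _ => ⟨hAV, hAconn.isPreconnected.infinite_of_nontrivial hAnt,
        hAconn.isPreconnected⟩⟩
    · exact ⟨∅, fun h => absurd h hS⟩
  choose AH hAd using hAd
  set Wp : Finset X := Fp.image xP with hWp
  obtain ⟨y, hy1, hy2⟩ := exists_pairs Fh AH (↑Wp) (Wp.finite_toSet)
    (fun S hS => (hAd S hS).2.1)
  -- epsilon for the p-part
  have hUε : ∀ S ∈ Fp, ∃ ε, 0 < ε ∧ Metric.ball (f₀ (xP S)) ε ⊆ UP S := by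
    intro S hS
    have hf₀S : f₀ ∈ S := hf₀' S (Finset.mem_filter.mp hS).1
    have := (hPd S hS).2
    rw [this] at hf₀S
    obtain ⟨ε, hε, hball⟩ := Metric.isOpen_iff.mp (hPd S hS).1 _ hf₀S
    exact ⟨ε, hε, hball⟩
  obtain ⟨ε1, hε1, hε1b⟩ := exists_eps_forall Fp
    (fun S ε => Metric.ball (f₀ (xP S)) ε ⊆ UP S)
    (fun S ε ε' hε' hle hp => (Metric.ball_subset_ball hle).trans hp) hUε
  -- bound for the r-values
  have hB : ∃ B : ℝ, 0 ≤ B ∧ ∀ S ∈ Fh, |rH S| ≤ B := by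
    refine ⟨∑ S ∈ Fh, |rH S|, Finset.sum_nonneg fun _ _ => abs_nonneg _, fun S hS =>
      Finset.single_le_sum (f := fun S => |rH S|) (fun _ _ => abs_nonneg _) hS⟩
  obtain ⟨B, hB0, hBb⟩ := hB
  set ε : ℝ := min ε1 (1/2) with hε
  have hεpos : 0 < ε := lt_min hε1 (by norm_num)
  -- target function
  set c : X → ℝ := fun w =>
    if w ∈ Wp then f₀ w else (if ∃ S ∈ Fh, y S true = w then B + 1 else -(B + 1)) with hc
  set T : Finset X := Wp ∪ Fh.image (fun S => y S true) ∪ Fh.image (fun S => y S false) with hT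
  obtain ⟨g, hgD0, hgapp⟩ := hD0approx T c ε hεpos
  set d : C(X, ℝ) := ⟨g, hcont g hgD0⟩ with hd
  refine ⟨d, ?_, ?_⟩
  · exact hgD0
  · rw [Set.mem_sInter]
    intro S hS
    rw [Finset.mem_coe] at hS
    by_cases hSp : S ∈ Fp
    · -- point-open member
      rw [(hPd S hSp).2]
      have hwT : xP S ∈ T := by
        rw [hT]
        exact Finset.mem_union_left _ (Finset.mem_union_left _
          (Finset.mem_image_of_mem xP hSp))
      have happ := hgapp (xP S) hwT
      have hcw : c (xP S) = f₀ (xP S) := by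
        rw [hc]
        simp only
        rw [if_pos (Finset.mem_image_of_mem xP hSp)]
      rw [hcw] at happ
      show d (xP S) ∈ UP S
      apply hε1b S hSp
      rw [Metric.mem_ball, Real.dist_eq]
      calc |d (xP S) - f₀ (xP S)| = |g (xP S) - f₀ (xP S)| := rfl
        _ < ε := happ
        _ ≤ ε1 := min_le_left _ _
    · -- open-point member
      have hSh : S ∈ Fh := Finset.mem_sdiff.mpr ⟨hS, hSp⟩
      rw [(hHd S hSh).2]
      obtain ⟨hAV, hAinf, hAconn⟩ := hAd S hSh
      set u : X := y S false with hu
      set v : X := y S true with hv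
      have huA : u ∈ AH S := (hy1 S hSh false).1
      have hvA : v ∈ AH S := (hy1 S hSh true).1
      have huW : u ∉ (↑Wp : Set X) := (hy1 S hSh false).2
      have hvW : v ∉ (↑Wp : Set X) := (hy1 S hSh true).2
      have huT : u ∈ T := by
        rw [hT]
        exact Finset.mem_union_right _ (Finset.mem_image_of_mem _ hSh)
      have hvT : v ∈ T := by
        rw [hT]
        exact Finset.mem_union_left _ (Finset.mem_union_right _
          (Finset.mem_image_of_mem _ hSh))
      have hcu : c u = -(B + 1) := by
        rw [hc]
        simp only
        rw [if_neg (by simpa using huW)]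
        rw [if_neg]
        rintro ⟨S', hS', heq⟩
        have := hy2 S' hS' S hSh true false heq
        simp at this
      have hcv : c v = B + 1 := by
        rw [hc]
        simp only
        rw [if_neg (by simpa using hvW)]
        rw [if_pos ⟨S, hSh, rfl⟩]
      have hgu : g u < rH S := by
        have := hgapp u huT
        rw [hcu] at this
        have h1 : |rH S| ≤ B := hBb S hSh
        have h2 : ε ≤ 1/2 := min_le_right _ _
        have := abs_lt.mp this
        cases' abs_le.mp h1 with h1a h1b
        linarith [this.2]
      have hgv : rH S < g v := by
        have := hgapp v hvT
        rw [hcv] at this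
        have h1 : |rH S| ≤ B := hBb S hSh
        have h2 : ε ≤ 1/2 := min_le_right _ _
        have := abs_lt.mp this
        cases' abs_le.mp h1 with h1a h1b
        linarith [this.1]
      -- intermediate value
      have hK : IsPreconnected (g '' (AH S)) :=
        hAconn.image g (hcont g hgD0).continuousOn
      have hmemIcc : rH S ∈ Icc (g u) (g v) := ⟨hgu.le, hgv.le⟩
      have := hK.Icc_subset ⟨u, huA, rfl⟩ ⟨v, hvA, rfl⟩ hmemIcc
      obtain ⟨z, hzA, hgz⟩ := this
      exact ⟨z, hAV hzA, hgz⟩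


/-- For a Tychonoff space with a π-network of nontrivial connected sets,
TFAE: (1) `C_ph(X)` separable; (2) countable T₀-separating family of zero-sets;
(3) separable submetrizable. -/
theorem stmt3 {X : Type*} [TopologicalSpace X] [T35Space X]
    (hγ : ∃ γ : Set (Set X), IsPiNetwork γ ∧ ∀ A ∈ γ, IsConnected A ∧ A.Nontrivial) :
    List.TFAE [
      @SeparableSpace C(X, ℝ) (biPointOpenTopology X),
      ∃ δ : Set (Set X), δ.Countable ∧ T0Separating δ ∧ ∀ Z ∈ δ, IsZeroSet Z,
      SeparableSubmetrizable X] := by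
  tfae_have 1 → 2 := one_to_two
  tfae_have 2 → 3 := two_to_three
  tfae_have 3 → 1 := three_to_one hγ
  tfae_finish
end

section
/- Let X be a Tychonoff space. If C_ph(X) is separable, then X has a countable T₀-separating family of zero-sets. -/
open TopologicalSpace Set Topology

/-- For Tychonoff `X`, if `C_ph(X)` is separable then `X` has a countable
T₀-separating family of zero-sets. -/
theorem stmt4 {X : Type*} [TopologicalSpace X] [T35Space X]
    (hsep : @SeparableSpace C(X, ℝ) (biPointOpenTopology X)) :
    ∃ γ : Set (Set X), γ.Countable ∧ T0Separating γ ∧ ∀ Z ∈ γ, IsZeroSet Z := by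
  obtain ⟨D, hDc, hDd⟩ := @TopologicalSpace.exists_countable_dense C(X, ℝ) (biPointOpenTopology X) hsep
  refine ⟨(fun g : C(X, ℝ) => {z | g z ≤ 1/2}) '' D, hDc.image _, ?_, ?_⟩
  · intro x y hxy
    obtain ⟨f, hf, hfx, hfy⟩ := CompletelyRegularSpace.completely_regular x {y}
      (isClosed_singleton) (by simpa using hxy)
    set W : Set C(X, ℝ) := {g : C(X, ℝ) | g x ∈ Iio (1/2:ℝ)} ∩ {g : C(X, ℝ) | g y ∈ Ioi (1/2:ℝ)}
    have hW : IsOpen[biPointOpenTopology X] W := by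
      apply GenerateOpen.inter
      · exact GenerateOpen.basic _ (Or.inl ⟨x, Iio (1/2), isOpen_Iio, rfl⟩)
      · exact GenerateOpen.basic _ (Or.inl ⟨y, Ioi (1/2), isOpen_Ioi, rfl⟩)
    have hWne : W.Nonempty := by
      refine ⟨⟨fun z => (f z : ℝ), continuous_subtype_val.comp hf⟩, ?_, ?_⟩
      · simp [hfx]
      · have := hfy (mem_singleton y)
        simp only [ContinuousMap.coe_mk, mem_setOf_eq, mem_Ioi]
        rw [this]; norm_num
    obtain ⟨g, hgW, hgD⟩ := (@Dense.inter_open_nonempty C(X, ℝ) (biPointOpenTopology X) D hDd W hW hWne)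
    have h1 : g x < 1/2 := hgW.1
    have h2 : (1/2:ℝ) < g y := hgW.2
    exact ⟨{z | g z ≤ 1/2}, ⟨g, hgD, rfl⟩, Or.inl ⟨le_of_lt h1, not_le.mpr h2⟩⟩
  · rintro Z ⟨g, -, rfl⟩
    refine ⟨fun z => max (g z - 1/2) 0, (by fun_prop), ?_⟩
    ext z
    simp [max_eq_right_iff, sub_nonpos]
end

section
/- Let X be a Tychonoff space that has a π-network consisting of nontrivial connected sets and admits a coarser separable metrizable topology. Then C_ph(X) is separable. -/
open TopologicalSpace Set Topology

section AuxiliaryForStmt6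


variable {X : Type*}

/-- Parameterized family of candidate functions: finite sums of rational bumps. -/
noncomputable def GF (d : X → X → ℝ) (e : ℕ → X) (p : List (ℚ × ℕ) × ℚ) (x : X) : ℝ :=
  (p.1.map (fun qk => (qk.1 : ℝ) * max 0 (1 - d x (e qk.2) / (p.2 : ℝ)))).sum

lemma GF_continuous [TopologicalSpace X] (d : X → X → ℝ) (e : ℕ → X)
    (hd : ∀ s, Continuous fun x => d x s) (p : List (ℚ × ℕ) × ℚ) :
    Continuous (GF d e p) := by
  obtain ⟨L, δ⟩ := p
  induction L with
  | nil =>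
    have h0 : GF d e ([], δ) = fun _ => (0 : ℝ) := by funext x; simp [GF]
    rw [h0]; exact continuous_const
  | cons qk L ih =>
    have hEq : GF d e (qk :: L, δ)
        = fun x => ((qk.1 : ℝ) * max 0 (1 - d x (e qk.2) / (δ : ℝ))) + GF d e (L, δ) x := by
      funext x; simp [GF]
    rw [hEq]
    exact (continuous_const.mul (continuous_const.max
      (continuous_const.sub ((hd _).div_const _)))).add ih

lemma list_sum_single {α : Type*} (f : α → ℝ) :
    ∀ L : List α, L.Nodup → ∀ y ∈ L, (∀ x ∈ L, x ≠ y → f x = 0) →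
      (L.map f).sum = f y := by
  intro L
  induction L with
  | nil => simp
  | cons a L ih =>
    intro hnd y hy h0
    rcases List.mem_cons.mp hy with rfl | hy'
    · simp only [List.map_cons, List.sum_cons]
      have hz : (L.map f).sum = 0 := by
        refine List.sum_eq_zero ?_
        intro z hz
        obtain ⟨x, hx, rfl⟩ := List.mem_map.mp hz
        exact h0 x (List.mem_cons_of_mem _ hx)
          (fun h => (List.nodup_cons.mp hnd).1 (h ▸ hx))
      rw [hz]; ring
    · have ha : f a = 0 := by
        refine h0 a List.mem_cons_self ?_
        rintro rfl; exact (List.nodup_cons.mp hnd).1 hy'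
      simp only [List.map_cons, List.sum_cons, ha, zero_add]
      exact ih (List.nodup_cons.mp hnd).2 y hy'
        (fun x hx hxy => h0 x (List.mem_cons_of_mem _ hx) hxy)


lemma GF_dense {X : Type*} (d : X → X → ℝ) (e : ℕ → X)
    (hself : ∀ x, d x x = 0)
    (hpos : ∀ x y, x ≠ y → 0 < d x y)
    (hsymm : ∀ x y, d x y = d y x)
    (htri : ∀ x y z, d x z ≤ d x y + d y z)
    (hdense : ∀ x : X, ∀ ε : ℝ, 0 < ε → ∃ k : ℕ, d x (e k) < ε)
    (P : Finset X) (v : X → ℝ) {ε : ℝ} (hε : 0 < ε) :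
    ∃ p : List (ℚ × ℕ) × ℚ, ∀ x ∈ P, |GF d e p x - v x| < ε := by
  classical
  have hnonneg : ∀ x y, 0 ≤ d x y := by
    intro x y
    have h1 := htri x y x
    have h2 := hself x
    have h3 := hsymm y x
    nlinarith
  -- minimal pairwise distance, capped by 1
  set Q : Finset ℝ :=
    insert (1 : ℝ) (((P ×ˢ P).filter (fun pr => pr.1 ≠ pr.2)).image (fun pr => d pr.1 pr.2))
    with hQ
  have hQne : Q.Nonempty := ⟨1, Finset.mem_insert_self _ _⟩
  set δ₀ : ℝ := Q.min' hQne with hδ₀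
  have hδ₀pos : 0 < δ₀ := by
    rw [Finset.lt_min'_iff]
    intro y hy
    rcases Finset.mem_insert.mp hy with rfl | hy'
    · norm_num
    · obtain ⟨pr, hpr, rfl⟩ := Finset.mem_image.mp hy'
      exact hpos _ _ (Finset.mem_filter.mp hpr).2
  have hδ₀le : ∀ x ∈ P, ∀ y ∈ P, x ≠ y → δ₀ ≤ d x y := by
    intro x hx y hy hxy
    refine Finset.min'_le _ _ ?_
    exact Finset.mem_insert_of_mem (Finset.mem_image.mpr
      ⟨(x, y), Finset.mem_filter.mpr ⟨Finset.mem_product.mpr ⟨hx, hy⟩, hxy⟩, rfl⟩)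
  obtain ⟨δq, hδ1, hδ2⟩ := exists_rat_btwn (half_lt_self hδ₀pos)
  set δ : ℝ := (δq : ℝ) with hδdef
  have hδpos : 0 < δ := lt_trans (half_pos hδ₀pos) hδ1
  -- rational approximations of targets
  have hqex : ∀ x : X, ∃ qx : ℚ, |v x - (qx : ℝ)| < ε / 2 :=
    fun x => exists_rat_near (v x) (half_pos hε)
  choose q hq using hqex
  set M : ℝ := 1 + ∑ x ∈ P, |(q x : ℝ)| with hM
  have hMpos : 0 < M := by
    have : (0:ℝ) ≤ ∑ x ∈ P, |(q x : ℝ)| := Finset.sum_nonneg fun x _ => abs_nonneg _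
    linarith
  have hMq : ∀ x ∈ P, |(q x : ℝ)| ≤ M := by
    intro x hx
    have := Finset.single_le_sum (f := fun x => |(q x : ℝ)|)
      (fun y _ => abs_nonneg _) hx
    linarith
  set η : ℝ := min δ (min (δ₀ - δ) (δ * ε / (2 * M))) with hη
  have hηpos : 0 < η := by
    refine lt_min hδpos (lt_min (by linarith) ?_)
    positivity
  have hηδ : η ≤ δ := min_le_left _ _
  have hηδ₀ : η ≤ δ₀ - δ := le_trans (min_le_right _ _) (min_le_left _ _)
  have hηε : η ≤ δ * ε / (2 * M) := le_trans (min_le_right _ _) (min_le_right _ _)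
  choose k hk using fun x => hdense x η hηpos
  refine ⟨(P.toList.map fun x => (q x, k x), δq), ?_⟩
  intro y hy
  have hGF : GF d e (P.toList.map fun x => (q x, k x), δq) y
      = (P.toList.map (fun x => (q x : ℝ) * max 0 (1 - d y (e (k x)) / δ))).sum := by
    simp [GF, List.map_map, Function.comp, hδdef]
  rw [hGF]
  have hvanish : ∀ x ∈ P.toList, x ≠ y →
      (q x : ℝ) * max 0 (1 - d y (e (k x)) / δ) = 0 := by
    intro x hx hxy
    have hxP : x ∈ P := Finset.mem_toList.mp hx
    have h1 : δ₀ ≤ d y x := hδ₀le y hy x hxP (Ne.symm hxy)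
    have h2 : d y x ≤ d y (e (k x)) + d x (e (k x)) := by
      have := htri y (e (k x)) x
      have := hsymm (e (k x)) x
      calc d y x ≤ d y (e (k x)) + d (e (k x)) x := htri y (e (k x)) x
        _ = d y (e (k x)) + d x (e (k x)) := by rw [hsymm (e (k x)) x]
    have h3 : d x (e (k x)) < η := hk x
    have h4 : δ ≤ d y (e (k x)) := by linarith
    have h5 : (1:ℝ) ≤ d y (e (k x)) / δ := (one_le_div hδpos).mpr h4
    have h6 : max 0 (1 - d y (e (k x)) / δ) = 0 := max_eq_left (by linarith)
    rw [h6, mul_zero]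
  have hsum : (P.toList.map (fun x => (q x : ℝ) * max 0 (1 - d y (e (k x)) / δ))).sum
      = (q y : ℝ) * max 0 (1 - d y (e (k y)) / δ) :=
    list_sum_single _ P.toList P.nodup_toList y (Finset.mem_toList.mpr hy) hvanish
  rw [hsum]
  set c : ℝ := d y (e (k y)) with hc
  have hc0 : 0 ≤ c := hnonneg _ _
  have hcη : c < η := hk y
  have hcδ : c < δ := lt_of_lt_of_le hcη hηδ
  have hmax : max 0 (1 - c / δ) = 1 - c / δ := by
    refine max_eq_right ?_
    have : c / δ < 1 := (div_lt_one hδpos).mpr hcδ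
    linarith
  rw [hmax]
  have key1 : |(q y : ℝ) * (1 - c / δ) - (q y : ℝ)| = |(q y : ℝ)| * (c / δ) := by
    have : (q y : ℝ) * (1 - c / δ) - (q y : ℝ) = -((q y : ℝ) * (c / δ)) := by ring
    rw [this, abs_neg, abs_mul, abs_of_nonneg (div_nonneg hc0 hδpos.le)]
  have key2 : |(q y : ℝ)| * (c / δ) ≤ M * (η / δ) := by
    apply mul_le_mul (hMq y hy) ?_ (div_nonneg hc0 hδpos.le) hMpos.le
    gcongr
  have h9 : η * (2 * M) ≤ (δ * ε / (2 * M)) * (2 * M) :=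
    mul_le_mul_of_nonneg_right hηε (by positivity)
  have h10 : (δ * ε / (2 * M)) * (2 * M) = δ * ε := by field_simp
  have h8 : M * (η / δ) ≤ ε / 2 := by
    rw [mul_div_assoc']
    rw [div_le_iff₀ hδpos]
    nlinarith
  have habs := abs_sub_le ((q y : ℝ) * (1 - c / δ)) ((q y : ℝ)) (v y)
  rw [key1] at habs
  have hqy : |(q y : ℝ) - v y| < ε / 2 := by
    rw [abs_sub_comm]; exact hq y
  linarith

lemma selection {X α : Type*} [Nonempty X] (A : α → Set X) (r : α → ℝ)
    (T : Set X) (hT : T.Finite) (f : X → ℝ) :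
    ∀ F : Finset α, (∀ j ∈ F, (A j).Infinite) →
    ∃ (a b : α → X) (v : X → ℝ), (∀ j ∈ F, a j ∈ A j ∧ b j ∈ A j) ∧
      (∀ x ∈ T, v x = f x) ∧ ∀ j ∈ F, v (a j) = r j - 1 ∧ v (b j) = r j + 1 := by
  classical
  intro F
  induction F using Finset.induction_on with
  | empty =>
    intro _
    exact ⟨fun _ => Classical.arbitrary X, fun _ => Classical.arbitrary X, f,
      by simp, fun x _ => rfl, by simp⟩
  | @insert j₀ F hj₀ ih =>
    intro hA
    obtain ⟨a, b, v, h1, h2, h3⟩ := ih (fun j hj => hA j (Finset.mem_insert_of_mem hj))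
    have hfin : (T ∪ a '' ↑F ∪ b '' ↑F).Finite :=
      (hT.union (F.finite_toSet.image a)).union (F.finite_toSet.image b)
    have hinf : (A j₀ \ (T ∪ a '' ↑F ∪ b '' ↑F)).Infinite :=
      (hA j₀ (Finset.mem_insert_self _ _)).diff hfin
    obtain ⟨a₀, ha₀, b₀, hb₀, hne⟩ := hinf.nontrivial
    refine ⟨Function.update a j₀ a₀, Function.update b j₀ b₀,
      fun x => if x = a₀ then r j₀ - 1 else if x = b₀ then r j₀ + 1 else v x, ?_, ?_, ?_⟩
    · intro j hj
      rcases Finset.mem_insert.mp hj with rfl | hj'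
      · simp [Function.update_self, ha₀.1, hb₀.1]
      · have hjne : j ≠ j₀ := fun h => hj₀ (h ▸ hj')
        simp [Function.update_of_ne hjne, h1 j hj']
    · intro x hx
      have hxa : x ≠ a₀ := fun h => ha₀.2 (Or.inl (Or.inl (h ▸ hx)))
      have hxb : x ≠ b₀ := fun h => hb₀.2 (Or.inl (Or.inl (h ▸ hx)))
      simp [hxa, hxb, h2 x hx]
    · intro j hj
      rcases Finset.mem_insert.mp hj with rfl | hj'
      · constructor
        · simp [Function.update_self]
        · simp [Function.update_self, Ne.symm hne]
      · have hjne : j ≠ j₀ := fun h => hj₀ (h ▸ hj')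
        have haj : a j ∈ a '' ↑F := ⟨j, hj', rfl⟩
        have hbj : b j ∈ b '' ↑F := ⟨j, hj', rfl⟩
        have h4 : a j ≠ a₀ := fun h => ha₀.2 (Or.inl (Or.inr (h ▸ haj)))
        have h5 : a j ≠ b₀ := fun h => hb₀.2 (Or.inl (Or.inr (h ▸ haj)))
        have h6 : b j ≠ a₀ := fun h => ha₀.2 (Or.inr (h ▸ hbj))
        have h7 : b j ≠ b₀ := fun h => hb₀.2 (Or.inr (h ▸ hbj))
        constructor
        · simp [Function.update_of_ne hjne, h4, h5, (h3 j hj').1]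
        · simp [Function.update_of_ne hjne, h6, h7, (h3 j hj').2]

lemma infinite_of_conn {X : Type*} [TopologicalSpace X] (d : X → X → ℝ)
    (hc : ∀ s, Continuous fun x => d x s) (hself : ∀ x, d x x = 0)
    (hpos : ∀ x y, x ≠ y → 0 < d x y) {A : Set X}
    (hA : IsPreconnected A) (hnt : A.Nontrivial) : A.Infinite := by
  obtain ⟨x, hx, y, hy, hxy⟩ := hnt
  have him : IsPreconnected ((fun z => d z x) '' A) :=
    hA.image _ (hc x).continuousOn
  have h0 : (0 : ℝ) ∈ (fun z => d z x) '' A := ⟨x, hx, hself x⟩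
  have hc' : d y x ∈ (fun z => d z x) '' A := ⟨y, hy, rfl⟩
  have hsub : Icc (0 : ℝ) (d y x) ⊆ (fun z => d z x) '' A := him.Icc_subset h0 hc'
  have hinf : (Icc (0 : ℝ) (d y x)).Infinite := Set.Icc_infinite (hpos y x (Ne.symm hxy))
  exact Set.Infinite.of_image _ (hinf.mono hsub)

lemma extract {X : Type*} [t' : TopologicalSpace X] [h1 : SeparableSpace X]
    [h2 : MetrizableSpace X] (hne : Nonempty X) :
    ∃ (d : X → X → ℝ) (e : ℕ → X),
      (∀ s, Continuous fun x => d x s) ∧ (∀ x, d x x = 0) ∧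
      (∀ x y, x ≠ y → 0 < d x y) ∧ (∀ x y, d x y = d y x) ∧
      (∀ x y z, d x z ≤ d x y + d y z) ∧
      ∀ x : X, ∀ ε : ℝ, 0 < ε → ∃ k, d x (e k) < ε := by
  letI := metrizableSpaceMetric X
  obtain ⟨S, hSc, hSd⟩ := exists_countable_dense X
  have hSne : S.Nonempty := hSd.nonempty
  obtain ⟨e, rfl⟩ := hSc.exists_eq_range hSne
  refine ⟨dist, e, fun s => (continuous_id.dist continuous_const), dist_self,
    fun x y h => dist_pos.mpr h, dist_comm, dist_triangle, ?_⟩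
  intro x ε hε
  have hx := hSd x
  rw [Metric.mem_closure_iff] at hx
  obtain ⟨s, hs, hds⟩ := hx ε hε
  obtain ⟨k, rfl⟩ := hs
  exact ⟨k, hds⟩

end AuxiliaryForStmt6

/-- A Tychonoff space with a π-network of nontrivial connected sets which is
separable submetrizable has separable `C_ph(X)`. -/
theorem stmt6 {X : Type*} [TopologicalSpace X] [T35Space X]
    (hγ : ∃ γ : Set (Set X), IsPiNetwork γ ∧ ∀ A ∈ γ, IsConnected A ∧ A.Nontrivial)
    (hsub : SeparableSubmetrizable X) :
    @SeparableSpace C(X, ℝ) (biPointOpenTopology X) := by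
  classical
  rename_i tX t35
  obtain ⟨γ, ⟨hγne, hγpi⟩, hγconn⟩ := hγ
  rcases isEmpty_or_nonempty X with hX | hX
  · haveI : Subsingleton C(X, ℝ) :=
      ⟨fun f g => ContinuousMap.ext fun x => (hX.false x).elim⟩
    have hdense : @Dense C(X, ℝ) (biPointOpenTopology X)
        {(⟨fun _ => 0, continuous_const⟩ : C(X, ℝ))} := by
      intro f
      have hfe : f = (⟨fun _ => 0, continuous_const⟩ : C(X, ℝ)) := Subsingleton.elim _ _
      rw [hfe]
      exact @subset_closure C(X, ℝ) (biPointOpenTopology X) _ _ rfl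
    exact @SeparableSpace.mk C(X, ℝ) (biPointOpenTopology X) ⟨_, countable_singleton _, hdense⟩
  · haveI := hX
    have hd : ∃ (d : X → X → ℝ) (e : ℕ → X),
        (∀ s, Continuous fun x => d x s) ∧ (∀ x, d x x = 0) ∧
        (∀ x y, x ≠ y → 0 < d x y) ∧ (∀ x y, d x y = d y x) ∧
        (∀ x y z, d x z ≤ d x y + d y z) ∧
        ∀ x : X, ∀ ε : ℝ, 0 < ε → ∃ k, d x (e k) < ε := by
      obtain ⟨t', hle, hsep, hmet⟩ := hsub
      have hts : tX ≤ t' := by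
        rw [TopologicalSpace.le_def]; exact fun U => hle U
      obtain ⟨d, e, hd_cont', hd_self, hd_pos, hd_symm, hd_tri, hd_dense⟩ :=
        @extract X t' hsep hmet hX
      exact ⟨d, e, fun s => continuous_le_dom hts (hd_cont' s), hd_self, hd_pos,
        hd_symm, hd_tri, hd_dense⟩
    obtain ⟨d, e, hd_cont, hd_self, hd_pos, hd_symm, hd_tri, hd_dense⟩ := hd
    set pS : Set (Set C(X, ℝ)) :=
      {S | ∃ (x : X) (U : Set ℝ), IsOpen U ∧ S = {f : C(X, ℝ) | f x ∈ U}} with hpSdef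
    set hS : Set (Set C(X, ℝ)) :=
      {S | ∃ (V : Set X) (r : ℝ), IsOpen V ∧ S = {f : C(X, ℝ) | ∃ x ∈ V, f x = r}} with hhSdef
    set Dmap : List (ℚ × ℕ) × ℚ → C(X, ℝ) :=
      fun p => ⟨GF d e p, GF_continuous d e hd_cont p⟩ with hDmap
    have hbasis := @TopologicalSpace.isTopologicalBasis_of_subbasis C(X, ℝ)
      (biPointOpenTopology X) (pS ∪ hS) rfl
    refine @SeparableSpace.mk C(X, ℝ) (biPointOpenTopology X)
      ⟨Set.range Dmap, Set.countable_range _, ?_⟩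
    rw [@TopologicalSpace.IsTopologicalBasis.dense_iff C(X, ℝ) (biPointOpenTopology X) _ hbasis]
    rintro o ho hone
    obtain ⟨F, ⟨hFfin, hFsub⟩, rfl⟩ := ho
    obtain ⟨f, hf⟩ := hone
    have hfmem : ∀ W ∈ F, f ∈ W := Set.mem_sInter.mp hf
    -- data for point-open conditions
    have hPdata : ∀ W : Set C(X, ℝ), ∃ (x : X) (ε : ℝ), 0 < ε ∧
        (W ∈ F ∩ pS → ∀ g : C(X, ℝ), |g x - f x| < ε → g ∈ W) := by
      intro W
      by_cases hW : W ∈ F ∩ pS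
      · obtain ⟨x, U, hU, hWeq⟩ := hW.2
        have hfx : f x ∈ U := by
          have h := hfmem W hW.1; rw [hWeq] at h; exact h
        rw [Metric.isOpen_iff] at hU
        obtain ⟨ε, hε, hball⟩ := hU _ hfx
        refine ⟨x, ε, hε, fun _ g hg => ?_⟩
        rw [hWeq]
        exact hball (by rw [Metric.mem_ball, Real.dist_eq]; exact hg)
      · exact ⟨Classical.arbitrary X, 1, one_pos, fun h => absurd h hW⟩
    choose xP εP hεP hPimp using hPdata
    -- data for open-point conditions
    have hHdata : ∀ W : Set C(X, ℝ), ∃ (A : Set X) (r : ℝ),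
        (W ∈ F \ pS → (A.Infinite ∧ IsPreconnected A ∧
          ∀ g : C(X, ℝ), (∃ z ∈ A, g z = r) → g ∈ W)) := by
      intro W
      by_cases hW : W ∈ F \ pS
      · have hWh : W ∈ hS := (hFsub hW.1).resolve_left hW.2
        obtain ⟨V, r, hV, hWeq⟩ := hWh
        have hfW : ∃ y ∈ V, f y = r := by
          have h := hfmem W hW.1; rw [hWeq] at h; exact h
        obtain ⟨y, hyV, -⟩ := hfW
        obtain ⟨A, hAγ, hAV⟩ := hγpi V hV ⟨y, hyV⟩
        obtain ⟨hAconn, hAnt⟩ := hγconn A hAγ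
        refine ⟨A, r, fun _ => ⟨infinite_of_conn d hd_cont hd_self hd_pos
          hAconn.isPreconnected hAnt, hAconn.isPreconnected, ?_⟩⟩
        rintro g ⟨z, hz, hgz⟩
        rw [hWeq]
        exact ⟨z, hAV hz, hgz⟩
      · exact ⟨∅, 0, fun h => absurd h hW⟩
    choose Aw rW hHimp using hHdata
    -- selection of witness points and target valuation
    set T : Set X := xP '' (F ∩ pS) with hTdef
    have hTfin : T.Finite := (hFfin.subset Set.inter_subset_left).image xP
    have hFhfin : (F \ pS).Finite := hFfin.subset Set.diff_subset
    obtain ⟨a, b, v, hab, hvT, hvr⟩ := selection Aw rW T hTfin (⇑f)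
      hFhfin.toFinset (fun W hW => (hHimp W (hFhfin.mem_toFinset.mp hW)).1)
    -- epsilon
    have hFpfin : (F ∩ pS).Finite := hFfin.subset Set.inter_subset_left
    set E : Finset ℝ := insert (1 : ℝ) (hFpfin.toFinset.image εP) with hEdef
    have hEne : E.Nonempty := ⟨1, Finset.mem_insert_self _ _⟩
    set ε₀ : ℝ := E.min' hEne with hε₀def
    have hε₀pos : 0 < ε₀ := by
      rw [hε₀def, Finset.lt_min'_iff]
      intro y hy
      rcases Finset.mem_insert.mp hy with rfl | hy'
      · norm_num
      · obtain ⟨W, hW, rfl⟩ := Finset.mem_image.mp hy'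
        exact hεP W
    have hε₀1 : ε₀ ≤ 1 := Finset.min'_le _ _ (Finset.mem_insert_self _ _)
    have hε₀W : ∀ W ∈ F ∩ pS, ε₀ ≤ εP W := fun W hW =>
      Finset.min'_le _ _ (Finset.mem_insert_of_mem
        (Finset.mem_image.mpr ⟨W, hFpfin.mem_toFinset.mpr hW, rfl⟩))
    -- points where we prescribe values
    set P : Finset X := hTfin.toFinset ∪ hFhfin.toFinset.image a ∪ hFhfin.toFinset.image b
      with hPdef
    obtain ⟨p, hp⟩ := GF_dense d e hd_self hd_pos hd_symm hd_tri hd_dense P v hε₀pos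
    refine ⟨Dmap p, ?_, ⟨p, rfl⟩⟩
    rw [Set.mem_sInter]
    intro W hW
    by_cases hWp : W ∈ pS
    · have hWFp : W ∈ F ∩ pS := ⟨hW, hWp⟩
      apply hPimp W hWFp
      have hxT : xP W ∈ T := ⟨W, hWFp, rfl⟩
      have hxP : xP W ∈ P := by
        rw [hPdef]
        simp only [Finset.mem_union]
        exact Or.inl (Or.inl (hTfin.mem_toFinset.mpr hxT))
      have hlt := hp _ hxP
      have hvx : v (xP W) = f (xP W) := hvT _ hxT
      calc |(Dmap p) (xP W) - f (xP W)| = |GF d e p (xP W) - v (xP W)| := by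
            rw [hvx]; rfl
        _ < ε₀ := hlt
        _ ≤ εP W := hε₀W W hWFp
    · have hWFh : W ∈ F \ pS := ⟨hW, hWp⟩
      obtain ⟨hinf, hconn', himp⟩ := hHimp W hWFh
      have hWfin : W ∈ hFhfin.toFinset := hFhfin.mem_toFinset.mpr hWFh
      obtain ⟨haA, hbA⟩ := hab W hWfin
      obtain ⟨hva, hvb⟩ := hvr W hWfin
      have haP : a W ∈ P := by
        rw [hPdef]; simp only [Finset.mem_union]
        exact Or.inl (Or.inr (Finset.mem_image.mpr ⟨W, hWfin, rfl⟩))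
      have hbP : b W ∈ P := by
        rw [hPdef]; simp only [Finset.mem_union]
        exact Or.inr (Finset.mem_image.mpr ⟨W, hWfin, rfl⟩)
      have h1 := hp _ haP
      have h2 := hp _ hbP
      rw [hva] at h1
      rw [hvb] at h2
      have hga : GF d e p (a W) < rW W := by
        have h1' := abs_lt.mp h1
        linarith [h1'.2]
      have hgb : rW W < GF d e p (b W) := by
        have h2' := abs_lt.mp h2
        linarith [h2'.1]
      have himg : IsPreconnected ((Dmap p : X → ℝ) '' (Aw W)) :=
        hconn'.image _ (Dmap p).continuous.continuousOn
      have hmem1 : GF d e p (a W) ∈ (Dmap p : X → ℝ) '' (Aw W) := ⟨a W, haA, rfl⟩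
      have hmem2 : GF d e p (b W) ∈ (Dmap p : X → ℝ) '' (Aw W) := ⟨b W, hbA, rfl⟩
      have hIcc := himg.Icc_subset hmem1 hmem2
      obtain ⟨z, hzA, hgz⟩ := hIcc ⟨hga.le, hgb.le⟩
      exact himp (Dmap p) ⟨z, hzA, hgz⟩
end

section
/- Let X be a Tychonoff space that is separable submetrizable (admits a coarser separable metrizable topology) and has a countable π-network consisting of 𝓘-sets. Then C_ph(X) is separable. -/
open TopologicalSpace Set Topology

/-! ### Auxiliary machinery for the proof of Statement 7 -/

noncomputable def jBump (s : ℝ) : ℝ := max 0 (min 1 (2 - |s|))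

lemma jBump_continuous : Continuous jBump :=
  continuous_const.max (continuous_const.min (continuous_const.sub continuous_abs))

lemma jBump_one {s : ℝ} (h : |s| ≤ 1) : jBump s = 1 := by
  unfold jBump
  rw [min_eq_left (by linarith), max_eq_right (by norm_num)]

lemma jBump_zero {s : ℝ} (h : 2 ≤ |s|) : jBump s = 0 := by
  unfold jBump
  rw [max_eq_left]
  calc min 1 (2 - |s|) ≤ 2 - |s| := min_le_right _ _
    _ ≤ 0 := by linarith

section Eval

variable {X : Type*}

noncomputable def payEval (g : ℕ → X → ℝ) (o : ℚ ⊕ ℚ × ℚ × ℕ) (x : X) : ℝ :=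
  match o with
  | Sum.inl q => (q : ℝ)
  | Sum.inr z => (z.1 : ℝ) + (z.2.1 : ℝ) * g z.2.2 x

@[simp] lemma payEval_inl (g : ℕ → X → ℝ) (qq : ℚ) (x : X) :
    payEval g (Sum.inl qq) x = (qq : ℝ) := rfl

@[simp] lemma payEval_inr (g : ℕ → X → ℝ) (z : ℚ × ℚ × ℕ) (x : X) :
    payEval g (Sum.inr z) x = (z.1 : ℝ) + (z.2.1 : ℝ) * g z.2.2 x := rfl

noncomputable def vEval (h : ℕ → X → ℝ) (p : ℚ × ℚ × ℕ) (x : X) : ℝ :=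
  (p.1 : ℝ) * ∑ k ∈ Finset.range p.2.2, (p.2.1 : ℝ) ^ k * h k x

noncomputable def dEval (h g : ℕ → X → ℝ)
    (P : (List (ℚ × (ℚ ⊕ ℚ × ℚ × ℕ))) × ℚ × ℚ × ℕ) (x : X) : ℝ :=
  (P.1.map (fun s => jBump (vEval h P.2 x - (s.1 : ℝ)) * payEval g s.2 x)).sum

variable [TopologicalSpace X] {h g : ℕ → X → ℝ}

lemma vEval_continuous (hh : ∀ k, Continuous (h k)) (p : ℚ × ℚ × ℕ) :
    Continuous (vEval h p) := by
  unfold vEval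
  exact continuous_const.mul (continuous_finset_sum _ fun k _ => continuous_const.mul (hh k))

lemma payEval_continuous (hg : ∀ n, Continuous (g n)) (o : ℚ ⊕ ℚ × ℚ × ℕ) :
    Continuous (payEval g o) := by
  cases o with
  | inl q => exact continuous_const
  | inr z => exact continuous_const.add (continuous_const.mul (hg z.2.2))

lemma dEval_continuous (hh : ∀ k, Continuous (h k)) (hg : ∀ n, Continuous (g n))
    (P : (List (ℚ × (ℚ ⊕ ℚ × ℚ × ℕ))) × ℚ × ℚ × ℕ) : Continuous (dEval h g P) := by
  obtain ⟨l, vp⟩ := P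
  induction l with
  | nil =>
    have he : dEval h g ([], vp) = fun _ => (0:ℝ) := funext fun x => by simp [dEval]
    rw [he]; exact continuous_const
  | cons a l ih =>
    have he : dEval h g (a :: l, vp) =
        fun x => jBump (vEval h vp x - (a.1 : ℝ)) * payEval g a.2 x + dEval h g (l, vp) x := by
      funext x; simp [dEval]
    rw [he]
    exact ((jBump_continuous.comp ((vEval_continuous hh vp).sub continuous_const)).mul
      (payEval_continuous hg a.2)).add ih

omit [TopologicalSpace X] in
lemma dEval_ofFn {N : ℕ} (center : Fin N → ℚ) (pay : Fin N → ℚ ⊕ ℚ × ℚ × ℕ)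
    (vp : ℚ × ℚ × ℕ) (w : X) (t₀ : Fin N)
    (h1 : |vEval h vp w - (center t₀ : ℝ)| ≤ 1)
    (h2 : ∀ t, t ≠ t₀ → 2 ≤ |vEval h vp w - (center t : ℝ)|) :
    dEval h g (List.ofFn (fun t => (center t, pay t)), vp) w = payEval g (pay t₀) w := by
  have he : dEval h g (List.ofFn (fun t => (center t, pay t)), vp) w =
      ∑ t : Fin N, jBump (vEval h vp w - (center t : ℝ)) * payEval g (pay t) w := by
    simp [dEval, List.map_ofFn, List.sum_ofFn, Function.comp]
  rw [he, Finset.sum_eq_single t₀]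
  · rw [jBump_one h1, one_mul]
  · intro t _ ht; rw [jBump_zero (h2 t ht), zero_mul]
  · intro hmem; exact absurd (Finset.mem_univ t₀) hmem

end Eval

lemma IsISet.infinite {X : Type*} [TopologicalSpace X] {A : Set X} (hA : IsISet A) :
    A.Infinite := by
  obtain ⟨f, a, b, -, hab, hsub⟩ := hA
  exact Set.Infinite.of_image f (((Set.Icc_infinite hab)).mono hsub)

lemma clamp_surj {X : Type*} [TopologicalSpace X] {A : Set X} (hA : IsISet A) :
    ∃ g : X → ℝ, Continuous g ∧ ∀ t ∈ Icc (0:ℝ) 1, ∃ p ∈ A, g p = t := by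
  obtain ⟨f, a, b, hf, hab, hsub⟩ := hA
  refine ⟨fun x => max 0 (min 1 ((f x - a) / (b - a))), ?_, ?_⟩
  · exact continuous_const.max (continuous_const.min ((hf.sub continuous_const).div_const _))
  · intro t ht
    have hba : (0:ℝ) < b - a := by linarith
    obtain ⟨p, hpA, hfp⟩ := hsub (show a + t * (b - a) ∈ Icc a b from
      ⟨by nlinarith [ht.1, ht.2], by nlinarith [ht.1, ht.2]⟩)
    refine ⟨p, hpA, ?_⟩
    have h1 : (f p - a) / (b - a) = t := by rw [hfp]; field_simp; ring
    show 0 ⊔ 1 ⊓ (f p - a) / (b - a) = t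
    rw [h1, min_eq_right ht.2, max_eq_right ht.1]

lemma exists_separating_v {X : Type*} (h : ℕ → X → ℝ)
    (hsep : ∀ x y : X, x ≠ y → ∃ k, h k x ≠ h k y)
    {N : ℕ} (y : Fin N → X) (hy : Function.Injective y) :
    ∃ vp : ℚ × ℚ × ℕ, ∀ t t' : Fin N, t ≠ t' →
      6 ≤ |vEval h vp (y t) - vEval h vp (y t')| := by
  classical
  set S : Finset (Fin N × Fin N) := Finset.univ.offDiag with hS
  by_cases hSne : S.Nonempty
  swap
  · refine ⟨(1, 1, 0), fun t t' htt' => absurd ?_ hSne⟩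
    exact ⟨(t, t'), Finset.mem_offDiag.2 ⟨Finset.mem_univ _, Finset.mem_univ _, htt'⟩⟩
  have hk : ∀ p : Fin N × Fin N, ∃ k : ℕ, p.1 ≠ p.2 → h k (y p.1) ≠ h k (y p.2) := by
    intro p
    by_cases hp : p.1 = p.2
    · exact ⟨0, fun hc => absurd hp hc⟩
    · obtain ⟨k, hk⟩ := hsep _ _ (fun he => hp (hy he))
      exact ⟨k, fun _ => hk⟩
  choose kk hkk using hk
  set K : ℕ := (S.sup kk) + 1 with hK
  set poly : Fin N × Fin N → Polynomial ℝ :=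
    fun p => ∑ k ∈ Finset.range K, Polynomial.C (h k (y p.1) - h k (y p.2)) * Polynomial.X ^ k
    with hpoly
  have hpolyne : ∀ p ∈ S, poly p ≠ 0 := by
    intro p hp
    have hne : p.1 ≠ p.2 := (Finset.mem_offDiag.1 hp).2.2
    have hkK : kk p ∈ Finset.range K := by
      simp only [Finset.mem_range, hK]
      exact Nat.lt_succ_of_le (Finset.le_sup hp)
    intro h0
    have hc : (poly p).coeff (kk p) = h (kk p) (y p.1) - h (kk p) (y p.2) := by
      rw [hpoly]
      rw [Polynomial.finset_sum_coeff]
      rw [Finset.sum_eq_single (kk p)]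
      · rw [Polynomial.coeff_C_mul, Polynomial.coeff_X_pow]
        simp
      · intro k _ hkne
        rw [Polynomial.coeff_C_mul, Polynomial.coeff_X_pow]
        simp [Ne.symm hkne]
      · intro hmem; exact absurd hkK hmem
    rw [h0] at hc
    simp only [Polynomial.coeff_zero] at hc
    exact hkk p hne (by linarith [sub_eq_zero.1 hc.symm])
  have hbad : (⋃ p ∈ S, {x : ℝ | (poly p).IsRoot x}).Finite :=
    Set.Finite.biUnion S.finite_toSet fun p hp => Polynomial.finite_setOf_isRoot (hpolyne p hp)
  have hratfin : {q : ℚ | (q : ℝ) ∈ ⋃ p ∈ S, {x : ℝ | (poly p).IsRoot x}}.Finite :=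
    hbad.preimage (Rat.cast_injective.injOn)
  obtain ⟨C, hC⟩ := hratfin.infinite_compl.nonempty
  set w : X → ℝ := fun x => ∑ k ∈ Finset.range K, (C : ℝ) ^ k * h k x with hw
  have hwd : ∀ p ∈ S, w (y p.1) - w (y p.2) ≠ 0 := by
    intro p hp
    have heval : (poly p).eval (C : ℝ) = w (y p.1) - w (y p.2) := by
      rw [hpoly, hw, Polynomial.eval_finset_sum]
      simp only [Polynomial.eval_mul, Polynomial.eval_C, Polynomial.eval_pow, Polynomial.eval_X]
      rw [← Finset.sum_sub_distrib]
      congr 1; ext k; ring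
    intro h0
    apply hC
    simp only [Set.mem_setOf_eq, Set.mem_iUnion]
    exact ⟨p, hp, by rw [Polynomial.IsRoot, heval, h0]⟩
  set δ : ℝ := S.inf' hSne (fun p => |w (y p.1) - w (y p.2)|) with hδ
  have hδpos : 0 < δ := by
    rw [hδ, Finset.lt_inf'_iff]
    intro p hp
    exact abs_pos.2 (hwd p hp)
  obtain ⟨Q, hQ⟩ := exists_rat_gt (6 / δ)
  have hQpos : (0:ℝ) < (Q : ℝ) := lt_trans (div_pos (by norm_num) hδpos) hQ
  refine ⟨(Q, C, K), fun t t' htt' => ?_⟩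
  have hmem : (t, t') ∈ S :=
    Finset.mem_offDiag.2 ⟨Finset.mem_univ _, Finset.mem_univ _, htt'⟩
  have hge : δ ≤ |w (y t) - w (y t')| := Finset.inf'_le _ hmem
  have he : vEval h (Q, C, K) (y t) - vEval h (Q, C, K) (y t') =
      (Q : ℝ) * (w (y t) - w (y t')) := by
    simp only [vEval, hw]; ring
  rw [he, abs_mul, abs_of_pos hQpos]
  calc (6:ℝ) = (6 / δ) * δ := by field_simp
    _ ≤ (Q : ℝ) * δ := by nlinarith
    _ ≤ (Q : ℝ) * |w (y t) - w (y t')| := by nlinarith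

lemma exists_sep_family_metric (Y : Type*) [MetricSpace Y] [SeparableSpace Y] [Nonempty Y] :
    ∃ h : ℕ → Y → ℝ, (∀ k, Continuous (h k)) ∧ ∀ x y : Y, x ≠ y → ∃ k, h k x ≠ h k y := by
  obtain ⟨u, hu⟩ := TopologicalSpace.exists_dense_seq Y
  refine ⟨fun k x => dist x (u k), fun k => continuous_id.dist continuous_const, ?_⟩
  intro x y hxy
  have hd : 0 < dist x y := dist_pos.2 hxy
  obtain ⟨k, hk⟩ : ∃ k, u k ∈ Metric.ball x (dist x y / 2) :=
    hu.exists_mem_open Metric.isOpen_ball ⟨x, Metric.mem_ball_self (by linarith)⟩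
  refine ⟨k, fun he => ?_⟩
  simp only at he
  rw [Metric.mem_ball] at hk
  have h1 : dist x y ≤ dist x (u k) + dist y (u k) := dist_triangle_right x y (u k)
  rw [dist_comm (u k) x] at hk
  rw [← he] at h1
  linarith

lemma exists_sep_family_aux (X : Type*) (t' : TopologicalSpace X) (hsep : @SeparableSpace X t')
    (hmet : @MetrizableSpace X t') (hne : Nonempty X) :
    ∃ h : ℕ → X → ℝ, (∀ k, @Continuous X ℝ t' _ (h k)) ∧
      ∀ x y : X, x ≠ y → ∃ k, h k x ≠ h k y := by
  letI := t'
  letI : MetricSpace X := TopologicalSpace.metrizableSpaceMetric X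
  exact exists_sep_family_metric X

lemma exists_sep_family {X : Type*} [t : TopologicalSpace X] [Nonempty X]
    (hsub : SeparableSubmetrizable X) :
    ∃ h : ℕ → X → ℝ, (∀ k, Continuous (h k)) ∧ ∀ x y : X, x ≠ y → ∃ k, h k x ≠ h k y := by
  obtain ⟨t', hle, hsep, hmet⟩ := hsub
  obtain ⟨h, hc, hs⟩ := exists_sep_family_aux X t' hsep hmet ‹_›
  refine ⟨h, fun k => ?_, hs⟩
  rw [continuous_def]
  intro U hU
  exact hle _ (@continuous_def X ℝ t' _ _ |>.1 (hc k) U hU)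

lemma exists_inj_mem {X : Type*} : ∀ (m : ℕ) (V : Fin m → Set X), (∀ j, (V j).Infinite) →
    ∀ (T : Set X), T.Finite →
      ∃ Z : Fin m → X, Function.Injective Z ∧ ∀ j, Z j ∈ V j ∧ Z j ∉ T := by
  intro m
  induction m with
  | zero => exact fun V hV T hT => ⟨Fin.elim0, fun a => a.elim0, fun j => j.elim0⟩
  | succ m ih =>
    intro V hV T hT
    obtain ⟨Z', hinj, hZ'⟩ := ih (fun j => V j.succ) (fun j => hV _) T hT
    obtain ⟨z, hz⟩ := ((hV 0).diff (hT.union (Set.finite_range Z'))).nonempty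
    rw [Set.mem_diff, Set.mem_union] at hz
    refine ⟨Fin.cons z Z', ?_, ?_⟩
    · exact Fin.cons_injective_of_injective (fun hmem => hz.2 (Or.inr hmem)) hinj
    · intro j
      refine Fin.cases ?_ ?_ j
      · exact ⟨hz.1, fun ht => hz.2 (Or.inl ht)⟩
      · intro i; simpa using hZ' i

lemma addCases_injective {α : Type*} {s m : ℕ} {f : Fin s → α} {g : Fin m → α}
    (hf : Function.Injective f) (hg : Function.Injective g) (hd : ∀ i j, f i ≠ g j) :
    Function.Injective (Fin.addCases (motive := fun _ => α) f g) := by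
  intro a b
  refine Fin.addCases (motive := fun a => Fin.addCases (motive := fun _ => α) f g a =
      Fin.addCases (motive := fun _ => α) f g b → a = b) ?_ ?_ a <;>
    refine fun i => Fin.addCases (motive := fun b => Fin.addCases (motive := fun _ => α) f g _ =
      Fin.addCases (motive := fun _ => α) f g b → _ = b) ?_ ?_ b <;>
      intro j hij <;> simp only [Fin.addCases_left, Fin.addCases_right] at hij
  · rw [hf hij]
  · exact absurd hij (hd i j)
  · exact absurd hij.symm (hd j i)
  · rw [hg hij]

lemma exists_lists {X : Type*} [TopologicalSpace X] (F : Set (Set C(X,ℝ))) (hfin : F.Finite)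
    (hsub : F ⊆ ({S | ∃ (x : X) (U : Set ℝ), IsOpen U ∧ S = {f : C(X, ℝ) | f x ∈ U}} ∪
      {S | ∃ (V : Set X) (r : ℝ), IsOpen V ∧ S = {f : C(X, ℝ) | ∃ x ∈ V, f x = r}})) :
    ∃ (lp : List (X × Set ℝ)) (lh : List (Set X × ℝ)),
      (∀ p ∈ lp, IsOpen p.2) ∧ (∀ e ∈ lh, IsOpen e.1) ∧
      ∀ gg : C(X,ℝ), ((∀ p ∈ lp, gg p.1 ∈ p.2) ∧ ∀ e ∈ lh, ∃ x ∈ e.1, gg x = e.2) ↔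
        gg ∈ ⋂₀ F := by
  revert hsub
  refine Set.Finite.induction_on F hfin ?_ ?_
  · exact fun _ => ⟨[], [], by simp, by simp, fun gg => by simp⟩
  · intro S F hSF hFfin ih hsub
    obtain ⟨lp, lh, hlp, hlh, hiff⟩ := ih (fun T hT => hsub (Set.mem_insert_of_mem _ hT))
    have hS := hsub (Set.mem_insert _ _)
    rcases hS with ⟨x, U, hU, rfl⟩ | ⟨V, r, hV, rfl⟩
    · refine ⟨(x, U) :: lp, lh, ?_, hlh, ?_⟩
      · intro p hp
        rcases List.mem_cons.1 hp with rfl | hp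
        · exact hU
        · exact hlp p hp
      · intro gg
        rw [Set.sInter_insert, Set.mem_inter_iff, ← hiff gg]
        simp only [List.forall_mem_cons]
        constructor
        · rintro ⟨⟨h1, h2⟩, h3⟩; exact ⟨h1, h2, h3⟩
        · rintro ⟨h1, h2, h3⟩; exact ⟨⟨h1, h2⟩, h3⟩
    · refine ⟨lp, (V, r) :: lh, hlp, ?_, ?_⟩
      · intro e he
        rcases List.mem_cons.1 he with rfl | he
        · exact hV
        · exact hlh e he
      · intro gg
        rw [Set.sInter_insert, Set.mem_inter_iff, ← hiff gg]
        simp only [List.forall_mem_cons]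
        constructor
        · rintro ⟨h1, h2, h3⟩; exact ⟨h2, h1, h3⟩
        · rintro ⟨h2, h1, h3⟩; exact ⟨h1, h2, h3⟩

/-- A separable submetrizable Tychonoff space with a countable π-network
consisting of 𝓘-sets has separable `C_ph(X)`. -/
theorem stmt7 {X : Type*} [TopologicalSpace X] [T35Space X]
    (hsub : SeparableSubmetrizable X)
    (hγ : ∃ γ : Set (Set X), γ.Countable ∧ IsPiNetwork γ ∧ ∀ A ∈ γ, IsISet A) :
    @SeparableSpace C(X, ℝ) (biPointOpenTopology X) := by
  classical
  letI τC : TopologicalSpace C(X, ℝ) := biPointOpenTopology X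
  rcases isEmpty_or_nonempty X with hX | hX
  · haveI hsing : Subsingleton C(X, ℝ) := ⟨fun f g => ContinuousMap.ext fun x => (hX.false x).elim⟩
    exact ⟨⟨Set.univ, Set.countable_univ, dense_univ⟩⟩
  obtain ⟨γ, hγc, ⟨hneA, hpi⟩, hI⟩ := hγ
  have hγne : γ.Nonempty := by
    obtain ⟨A, hA, -⟩ := hpi Set.univ isOpen_univ Set.univ_nonempty
    exact ⟨A, hA⟩
  obtain ⟨E, hE⟩ := hγc.exists_eq_range hγne
  have hIE : ∀ n : ℕ, IsISet (E n) := fun n => hI (E n) (hE ▸ Set.mem_range_self n)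
  choose g hgc hgsurj using fun n => clamp_surj (hIE n)
  obtain ⟨h, hhc, hhsep⟩ := exists_sep_family hsub
  refine ⟨⟨Set.range (fun P => (⟨dEval h g P, dEval_continuous hhc hgc P⟩ : C(X,ℝ))),
    Set.countable_range _, ?_⟩⟩
  have hbasis := TopologicalSpace.isTopologicalBasis_of_subbasis
    (s := ({S | ∃ (x : X) (U : Set ℝ), IsOpen U ∧ S = {f : C(X, ℝ) | f x ∈ U}} ∪
     {S | ∃ (V : Set X) (r : ℝ), IsOpen V ∧ S = {f : C(X, ℝ) | ∃ x ∈ V, f x = r}}))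
    (t := τC) rfl
  rw [hbasis.dense_iff]
  rintro o ⟨F, ⟨hFfin, hFsub⟩, rfl⟩ ⟨f₀, hf₀⟩
  obtain ⟨lp, lh, hlpO, hlhO, hiff⟩ := exists_lists F hFfin hFsub
  obtain ⟨hf₀p, hf₀h⟩ := (hiff f₀).2 hf₀
  -- data for the open-point constraints
  set m := lh.length with hm
  set V : Fin m → Set X := fun j => (lh.get j).1 with hV
  set r : Fin m → ℝ := fun j => (lh.get j).2 with hr
  have hget : ∀ j : Fin m, lh.get j ∈ lh := fun j => lh.get_mem j
  have hVopen : ∀ j, IsOpen (V j) := fun j => hlhO _ (hget j)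
  have hVne : ∀ j, ∃ x ∈ V j, f₀ x = r j := fun j => hf₀h _ (hget j)
  have hVinf : ∀ j, (V j).Infinite := by
    intro j
    obtain ⟨x, hx, -⟩ := hVne j
    obtain ⟨A, hAγ, hAs⟩ := hpi (V j) (hVopen j) ⟨x, hx⟩
    exact Set.Infinite.mono hAs (hI A hAγ).infinite
  -- the finitely many evaluation points
  set T : Finset X := (lp.map Prod.fst).toFinset with hT
  obtain ⟨Z, hZinj, hZ⟩ := exists_inj_mem m V hVinf (T : Set X) T.finite_toSet
  set s := T.card with hs
  set xg : Fin s → X := fun i => ((T.equivFin.symm i : T) : X) with hxg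
  have hxginj : Function.Injective xg :=
    fun a b hab => T.equivFin.symm.injective (Subtype.coe_injective hab)
  have hxgT : ∀ i, xg i ∈ T := fun i => (T.equivFin.symm i).2
  set y : Fin (s + m) → X := Fin.addCases (motive := fun _ => X) xg Z with hy
  have hyinj : Function.Injective y :=
    addCases_injective hxginj hZinj (fun i j hij => (hZ j).2 (hij ▸ hxgT i))
  obtain ⟨vp, hvp⟩ := exists_separating_v h hhsep y hyinj
  set v : X → ℝ := vEval h vp with hv
  have hcex : ∀ wpt : X, ∃ cq : ℚ, |v wpt - (cq : ℝ)| < 1 :=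
    fun wpt => exists_rat_near (v wpt) one_pos
  choose c hc using hcex
  -- rational values for the point constraints
  set W : X → Set ℝ := fun x => ⋂ p ∈ {p : X × Set ℝ | p ∈ lp ∧ p.1 = x}, p.2 with hW
  have hWopen : ∀ x, IsOpen (W x) := by
    intro x
    apply Set.Finite.isOpen_biInter
    · exact (lp.finite_toSet).subset (fun p hp => hp.1)
    · exact fun p hp => hlpO p hp.1
  have hf₀W : ∀ x, f₀ x ∈ W x := by
    intro x
    apply Set.mem_iInter₂.2
    rintro p ⟨hp, rfl⟩
    exact hf₀p p hp
  have hqex : ∀ x : X, ∃ qq : ℚ, (qq : ℝ) ∈ W x :=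
    fun x => Rat.denseRange_cast.exists_mem_open (hWopen x) ⟨f₀ x, hf₀W x⟩
  choose q hq using hqex
  -- rational interval data for the open-point constraints
  choose α hα using fun j : Fin m => exists_rat_lt (r j)
  choose β hβ using fun j : Fin m => exists_rat_gt (r j - (α j : ℝ))
  have hβpos : ∀ j, (0:ℝ) < (β j : ℝ) := fun j => lt_trans (by linarith [hα j]) (hβ j)
  -- π-network members inside the localized open sets
  have hOex : ∀ j : Fin m, ∃ n : ℕ, E n ⊆ V j ∩ {x : X | |v x - (c (Z j) : ℝ)| < 1} := by
    intro j
    have hopen : IsOpen (V j ∩ {x : X | |v x - (c (Z j) : ℝ)| < 1}) := by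
      refine (hVopen j).inter ?_
      have hpre : {x : X | |v x - (c (Z j) : ℝ)| < 1} = v ⁻¹' (Metric.ball ((c (Z j) : ℝ)) 1) := by
        ext w; simp [Metric.mem_ball, Real.dist_eq]
      rw [hpre, hv]
      exact Metric.isOpen_ball.preimage (vEval_continuous hhc vp)
    obtain ⟨A, hAγ, hAs⟩ := hpi _ hopen ⟨Z j, (hZ j).1, hc (Z j)⟩
    rw [hE] at hAγ
    obtain ⟨n, rfl⟩ := hAγ
    exact ⟨n, hAs⟩
  choose nn hnn using hOex
  have ht₀ : ∀ j : Fin m, (r j - (α j : ℝ)) / (β j : ℝ) ∈ Icc (0:ℝ) 1 := by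
    intro j
    constructor
    · exact div_nonneg (by linarith [hα j]) (le_of_lt (hβpos j))
    · rw [div_le_one (hβpos j)]; linarith [hβ j]
  have hpex : ∀ j : Fin m, ∃ p ∈ E (nn j), g (nn j) p = (r j - (α j : ℝ)) / (β j : ℝ) :=
    fun j => hgsurj (nn j) _ (ht₀ j)
  choose pj hpjmem hpjval using hpex
  -- assemble the approximating function
  set pay : Fin (s + m) → (ℚ ⊕ ℚ × ℚ × ℕ) :=
    Fin.addCases (motive := fun _ => ℚ ⊕ ℚ × ℚ × ℕ)
      (fun i => Sum.inl (q (xg i))) (fun j => Sum.inr (α j, β j, nn j)) with hpay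
  set center : Fin (s + m) → ℚ := fun t => c (y t) with hcenter
  set P : (List (ℚ × (ℚ ⊕ ℚ × ℚ × ℕ))) × ℚ × ℚ × ℕ :=
    (List.ofFn (fun t => (center t, pay t)), vp) with hP
  refine ⟨⟨dEval h g P, dEval_continuous hhc hgc P⟩, ?_, Set.mem_range_self P⟩
  apply (hiff _).1
  constructor
  · -- point constraints
    intro p hp
    have hxT : p.1 ∈ T := by rw [hT]; exact List.mem_toFinset.2 (List.mem_map.2 ⟨p, hp, rfl⟩)
    set i : Fin s := T.equivFin ⟨p.1, hxT⟩ with hi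
    have hxgi : xg i = p.1 := by rw [hxg, hi]; simp
    have hyt : y (Fin.castAdd m i) = p.1 := by rw [hy, Fin.addCases_left]; exact hxgi
    have hdval : dEval h g P p.1 = payEval g (pay (Fin.castAdd m i)) p.1 := by
      rw [hP]
      apply dEval_ofFn
      · simp only [← hv, hcenter]
        rw [hyt]; exact le_of_lt (hc p.1)
      · intro t ht
        simp only [← hv, hcenter]
        have h6 := hvp t (Fin.castAdd m i) ht
        rw [hyt] at h6
        have h1 := hc (y t)
        have htri : |v p.1 - v (y t)| ≤ |v p.1 - (c (y t) : ℝ)| + |(c (y t) : ℝ) - v (y t)| :=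
          abs_sub_le _ _ _
        have hcomm1 : |v (y t) - v p.1| = |v p.1 - v (y t)| := abs_sub_comm _ _
        have hcomm2 : |v (y t) - (c (y t) : ℝ)| = |(c (y t) : ℝ) - v (y t)| := abs_sub_comm _ _
        linarith
    show dEval h g P p.1 ∈ p.2
    rw [hdval]
    have hpays : pay (Fin.castAdd m i) = Sum.inl (q p.1) := by
      rw [hpay, Fin.addCases_left, hxgi]
    rw [hpays, payEval_inl]
    exact Set.mem_iInter₂.1 (hq p.1) p ⟨hp, rfl⟩
  · -- open-point constraints
    intro e he
    obtain ⟨j, hj⟩ := List.mem_iff_get.1 he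
    have hmem := (hnn j) (hpjmem j)
    have hmem2 : |v (pj j) - (c (Z j) : ℝ)| < 1 := hmem.2
    have hVj : V j = e.1 := congrArg Prod.fst hj
    have hrj : r j = e.2 := congrArg Prod.snd hj
    have hyt : y (Fin.natAdd s j) = Z j := by rw [hy, Fin.addCases_right]
    have hdval : dEval h g P (pj j) = payEval g (pay (Fin.natAdd s j)) (pj j) := by
      rw [hP]
      apply dEval_ofFn
      · simp only [← hv, hcenter]
        rw [hyt]; exact le_of_lt hmem2
      · intro t ht
        simp only [← hv, hcenter]
        have h6 := hvp t (Fin.natAdd s j) ht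
        rw [hyt] at h6
        have h1 := hc (y t)
        have h2 := hc (Z j)
        have t1 : |v (y t) - v (Z j)| ≤ |v (y t) - v (pj j)| + |v (pj j) - v (Z j)| :=
          abs_sub_le _ _ _
        have t2 : |v (y t) - v (pj j)| ≤ |v (y t) - (c (y t) : ℝ)| +
            |(c (y t) : ℝ) - v (pj j)| := abs_sub_le _ _ _
        have t3 : |v (pj j) - v (Z j)| ≤ |v (pj j) - (c (Z j) : ℝ)| +
            |(c (Z j) : ℝ) - v (Z j)| := abs_sub_le _ _ _
        have hcomm1 : |(c (y t) : ℝ) - v (pj j)| = |v (pj j) - (c (y t) : ℝ)| := abs_sub_comm _ _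
        have hcomm2 : |(c (Z j) : ℝ) - v (Z j)| = |v (Z j) - (c (Z j) : ℝ)| := abs_sub_comm _ _
        linarith
    refine ⟨pj j, hVj ▸ hmem.1, ?_⟩
    show dEval h g P (pj j) = e.2
    rw [hdval]
    have hpays : pay (Fin.natAdd s j) = Sum.inr (α j, β j, nn j) := by
      rw [hpay, Fin.addCases_right]
    rw [hpays, payEval_inr]
    simp only
    rw [hpjval j, ← hrj]
    have hβne : ((β j : ℝ)) ≠ 0 := ne_of_gt (hβpos j)
    field_simp
    ring
end

section
/- If X is a nonempty perfect Polish space (a separable, completely metrizable space without isolated points), then C_ph(X) is separable. -/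
open TopologicalSpace Set Topology

namespace Stmt8Aux
open Filter

noncomputable def sigTerm (n : ℕ) (b : ℕ → Bool) : ℝ := if b n then ((2:ℝ)^(n+1))⁻¹ else 0

lemma sigTerm_nonneg (n : ℕ) (b : ℕ → Bool) : 0 ≤ sigTerm n b := by
  unfold sigTerm; split <;> positivity

lemma half_pow (n : ℕ) : (1/2:ℝ)^n = ((2:ℝ)^n)⁻¹ := by
  rw [one_div, inv_pow]

lemma sigTerm_le (n : ℕ) (b : ℕ → Bool) : sigTerm n b ≤ (1/2:ℝ)^n := by
  unfold sigTerm; split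
  · rw [← half_pow]
    exact pow_le_pow_of_le_one (by norm_num) (by norm_num) (Nat.le_succ n)
  · positivity

noncomputable def sigma' (b : ℕ → Bool) : ℝ := ∑' n, sigTerm n b

lemma sigTerm_continuous (i : ℕ) : Continuous (sigTerm i) := by
  have : Continuous (fun v : Bool => if v then ((2:ℝ)^(i+1))⁻¹ else 0) :=
    continuous_of_discreteTopology
  exact this.comp (continuous_apply i)

lemma sigma'_continuous : Continuous sigma' := by
  apply continuous_tsum (u := fun n => (1/2:ℝ)^n) sigTerm_continuous summable_geometric_two
  intro n b
  rw [Real.norm_eq_abs, abs_of_nonneg (sigTerm_nonneg n b)]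
  exact sigTerm_le n b

lemma sigTerm_summable (b : ℕ → Bool) : Summable (fun n => sigTerm n b) :=
  Summable.of_nonneg_of_le (fun n => sigTerm_nonneg n b) (fun n => sigTerm_le n b)
    summable_geometric_two

/-- remainder sequence for the greedy binary expansion -/
noncomputable def rem (y : ℝ) : ℕ → ℝ
  | 0 => y
  | n+1 => if ((2:ℝ)^(n+1))⁻¹ ≤ rem y n then rem y n - ((2:ℝ)^(n+1))⁻¹ else rem y n

noncomputable def dig (y : ℝ) (n : ℕ) : Bool := decide (((2:ℝ)^(n+1))⁻¹ ≤ rem y n)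

lemma rem_bounds {y : ℝ} (hy : y ∈ Icc (0:ℝ) 1) (n : ℕ) :
    0 ≤ rem y n ∧ rem y n ≤ ((2:ℝ)^n)⁻¹ := by
  induction n with
  | zero => simpa [rem] using hy
  | succ n ih =>
    rw [rem]
    split
    next h =>
      refine ⟨by linarith, ?_⟩
      have h2 : ((2:ℝ)^n)⁻¹ = 2 * ((2:ℝ)^(n+1))⁻¹ := by
        rw [pow_succ]; field_simp
      rw [h2] at ih
      linarith [ih.2]
    next h => exact ⟨ih.1, le_of_lt (lt_of_not_ge h)⟩

lemma rem_partial {y : ℝ} (n : ℕ) :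
    ∑ k ∈ Finset.range n, sigTerm k (dig y) = y - rem y n := by
  induction n with
  | zero => simp [rem]
  | succ n ih =>
    rw [Finset.sum_range_succ, ih]
    show y - rem y n + (if dig y n then ((2:ℝ)^(n+1))⁻¹ else 0) = y - rem y (n+1)
    rw [rem]
    unfold dig
    split
    next h =>
      simp only [decide_eq_true_eq] at h
      rw [if_pos h]; ring
    next h =>
      simp only [decide_eq_true_eq] at h
      rw [if_neg h]; ring

lemma sigma'_surj {y : ℝ} (hy : y ∈ Icc (0:ℝ) 1) : sigma' (dig y) = y := by
  have hs := sigTerm_summable (dig y)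
  have h1 : Tendsto (fun n => ∑ k ∈ Finset.range n, sigTerm k (dig y)) atTop (nhds (sigma' (dig y))) :=
    hs.hasSum.tendsto_sum_nat
  have h2 : Tendsto (fun n => ∑ k ∈ Finset.range n, sigTerm k (dig y)) atTop (nhds y) := by
    have hr : Tendsto (fun n => rem y n) atTop (nhds 0) := by
      have hg : Tendsto (fun n : ℕ => ((2:ℝ)^n)⁻¹) atTop (nhds 0) := by
        simpa [half_pow] using tendsto_pow_atTop_nhds_zero_of_lt_one (by norm_num : (0:ℝ) ≤ 1/2) (by norm_num : (1/2:ℝ) < 1)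
      exact squeeze_zero (fun n => (rem_bounds hy n).1) (fun n => (rem_bounds hy n).2) hg
    have : (fun n => ∑ k ∈ Finset.range n, sigTerm k (dig y)) = fun n => y - rem y n := by
      funext n; exact rem_partial n
    rw [this]
    simpa using (tendsto_const_nhds (x := y)).sub hr
  exact tendsto_nhds_unique h1 h2


lemma sigma'_surjOn : ∀ y ∈ Icc (0:ℝ) 1, ∃ b, sigma' b = y :=
  fun y hy => ⟨dig y, sigma'_surj hy⟩

lemma separable_of_subbasis {α : Type*} (s : Set (Set α)) (D : Set α) (hD : D.Countable)
    (h : ∀ F : Finset (Set α), ↑F ⊆ s → (⋂₀ (↑F : Set (Set α))).Nonempty →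
      ∃ d ∈ D, d ∈ ⋂₀ (↑F : Set (Set α))) :
    @SeparableSpace α (generateFrom s) := by
  letI t : TopologicalSpace α := generateFrom s
  have hb := isTopologicalBasis_of_subbasis (t := t) rfl
  refine ⟨⟨D, hD, ?_⟩⟩
  rw [hb.dense_iff]
  rintro o ⟨f, ⟨hfin, hfs⟩, rfl⟩ hne
  obtain ⟨F, rfl⟩ : ∃ F : Finset (Set α), ↑F = f := ⟨hfin.toFinset, hfin.coe_toFinset⟩
  obtain ⟨d, hdD, hdF⟩ := h F hfs hne
  exact ⟨d, hdF, hdD⟩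


variable {X : Type*} [MetricSpace X] [PerfectSpace X]

/-- In a perfect T1 space, a nonempty open set minus a finite set is nonempty. -/
lemma nonempty_diff_finite {U : Set X} (hU : IsOpen U) (hne : U.Nonempty) {F : Set X}
    (hF : F.Finite) : (U \ F).Nonempty := by
  obtain ⟨x, hx⟩ := hne
  have hW : IsOpen (U \ (F \ {x})) := hU.sdiff (hF.subset diff_subset).isClosed
  have hxW : x ∈ U \ (F \ {x}) := ⟨hx, by simp⟩
  have hacc := PerfectSpace.univ_preperfect (α := X) x (mem_univ x)
  rw [accPt_iff_nhds] at hacc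
  obtain ⟨y, ⟨hy, -⟩, hyx⟩ := hacc _ (hW.mem_nhds hxW)
  refine ⟨y, hy.1, fun hyF => ?_⟩
  exact hy.2 ⟨hyF, hyx⟩

lemma exists_ISet [CompleteSpace X] {U : Set X} (hU : IsOpen U) (hne : U.Nonempty) :
    ∃ (K : Set X) (s : C(X, ℝ)), IsClosed K ∧ K ⊆ U ∧
      ∀ t ∈ Icc (0:ℝ) 1, ∃ y ∈ K, s y = t := by
  obtain ⟨x, hx⟩ := hne
  obtain ⟨r, hr, hball⟩ := Metric.isOpen_iff.1 hU x hx
  -- perfect closed subset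
  set C : Set X := closure (Metric.ball x (r/2)) with hC
  have hCU : C ⊆ U := by
    refine (Metric.closure_ball_subset_closedBall.trans ?_).trans hball
    exact Metric.closedBall_subset_ball (by linarith)
  have hCperf : Perfect C := by
    apply Preperfect.perfect_closure
    have := (PerfectSpace.univ_preperfect (α := X)).open_inter
      (Metric.isOpen_ball (x := x) (ε := r/2))
    simpa using this
  have hCne : C.Nonempty := ⟨x, subset_closure (Metric.mem_ball_self (by linarith))⟩
  obtain ⟨f, hfC, hfcont, hfinj⟩ := hCperf.exists_nat_bool_injection hCne
  have hemb : IsClosedEmbedding f := hfcont.isClosedEmbedding hfinj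
  obtain ⟨s, hs⟩ := ContinuousMap.exists_extension' hemb ⟨sigma', sigma'_continuous⟩
  refine ⟨Set.range f, s, hemb.isClosed_range, hfC.trans hCU, ?_⟩
  intro t ht
  obtain ⟨b, hb⟩ := sigma'_surjOn t ht
  refine ⟨f b, mem_range_self b, ?_⟩
  have := congrFun hs b
  simp only [Function.comp_apply, ContinuousMap.coe_mk] at this
  rw [this, hb]


/-- The generic member of the countable dense set, built from: a dense sequence `e`,
bump functions `φ n`, surjection functions `s n` (both indexed by basic open sets). -/
noncomputable def bld {X : Type*} [MetricSpace X] (e : ℕ → X) (φ s : ℕ → C(X, ℝ))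
    (pr : Finset (ℚ × ℕ) × ℚ × Finset (ℕ × ℚ × ℚ)) : C(X, ℝ) where
  toFun := fun x =>
    (∑ pp ∈ pr.1, (pp.1 : ℝ) * max 0 (1 - dist x (e pp.2) / (pr.2.1 : ℝ)))
      * (1 - ∑ pp ∈ pr.2.2, φ pp.1 x)
      + ∑ pp ∈ pr.2.2, φ pp.1 x * ((pp.2.1 : ℝ) + ((pp.2.2 : ℝ) - (pp.2.1 : ℝ)) * s pp.1 x)
  continuous_toFun := by
    refine Continuous.add (Continuous.mul ?_ ?_) ?_
    · exact continuous_finset_sum _ (fun pp _ => continuous_const.mul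
        (continuous_const.max (continuous_const.sub
          ((continuous_id.dist continuous_const).div_const _))))
    · exact continuous_const.sub (continuous_finset_sum _ (fun pp _ => (φ pp.1).continuous))
    · exact continuous_finset_sum _ (fun pp _ => ((φ pp.1).continuous).mul
        (continuous_const.add (continuous_const.mul (s pp.1).continuous)))

lemma bld_apply {X : Type*} [MetricSpace X] (e : ℕ → X) (φ s : ℕ → C(X, ℝ))
    (pr : Finset (ℚ × ℕ) × ℚ × Finset (ℕ × ℚ × ℚ)) (x : X) :
    bld e φ s pr x =
      (∑ pp ∈ pr.1, (pp.1 : ℝ) * max 0 (1 - dist x (e pp.2) / (pr.2.1 : ℝ)))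
        * (1 - ∑ pp ∈ pr.2.2, φ pp.1 x)
        + ∑ pp ∈ pr.2.2, φ pp.1 x * ((pp.2.1 : ℝ) + ((pp.2.2 : ℝ) - (pp.2.1 : ℝ)) * s pp.1 x) :=
  rfl


lemma bld_apply' (e : ℕ → X) (φ s : ℕ → C(X, ℝ)) (pts : Finset (ℚ × ℕ)) (ρ : ℚ)
    (hits : Finset (ℕ × ℚ × ℚ)) (x : X) :
    bld e φ s (pts, ρ, hits) x =
      (∑ pp ∈ pts, (pp.1 : ℝ) * max 0 (1 - dist x (e pp.2) / (ρ : ℝ)))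
        * (1 - ∑ pp ∈ hits, φ pp.1 x)
        + ∑ pp ∈ hits, φ pp.1 x * ((pp.2.1 : ℝ) + ((pp.2.2 : ℝ) - (pp.2.1 : ℝ)) * s pp.1 x) :=
  rfl

lemma selA [Nonempty X] (T : Finset X) :
    ∀ G : Finset (Set X × ℝ), (∀ q ∈ G, IsOpen q.1 ∧ q.1.Nonempty) →
      ∃ p : (Set X × ℝ) → X, (∀ q ∈ G, p q ∈ q.1 ∧ p q ∉ T) ∧ Set.InjOn p ↑G := by
  classical
  intro G
  induction G using Finset.induction_on with
  | empty => exact fun _ => ⟨fun _ => Classical.arbitrary X, by simp, by simp⟩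
  | @insert q G hqG ih =>
    intro hG
    obtain ⟨p, hp, hpinj⟩ := ih (fun q' hq' => hG q' (Finset.mem_insert_of_mem hq'))
    have hop := hG q (Finset.mem_insert_self q G)
    have hne : ((q.1 \ (↑T ∪ ↑(G.image p))) : Set X).Nonempty :=
      nonempty_diff_finite hop.1 hop.2 (T.finite_toSet.union (G.image p).finite_toSet)
    obtain ⟨x, hxq, hxnot⟩ := hne
    refine ⟨Function.update p q x, ?_, ?_⟩
    · intro q' hq'
      rcases Finset.mem_insert.1 hq' with rfl | hq'
      · rw [Function.update_self]
        exact ⟨hxq, fun hxT => hxnot (Or.inl hxT)⟩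
      · have hne' : q' ≠ q := fun h => hqG (h ▸ hq')
        rw [Function.update_of_ne hne']
        exact hp q' hq'
    · intro a ha b hb hab
      rw [Finset.coe_insert, Set.mem_insert_iff] at ha hb
      have hximg : ∀ c, c ∈ G → x ≠ p c := by
        intro c hc hxc
        exact hxnot (Or.inr (Finset.mem_coe.2 (Finset.mem_image.2 ⟨c, hc, hxc.symm⟩)))
      rcases ha with ha | ha <;> rcases hb with hb | hb
      · rw [ha, hb]
      · exfalso
        have hbq : b ≠ q := fun h => hqG (Finset.mem_coe.1 (h ▸ hb))
        rw [ha, Function.update_self, Function.update_of_ne hbq] at hab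
        exact (hximg b (Finset.mem_coe.1 hb)) hab
      · exfalso
        have haq : a ≠ q := fun h => hqG (Finset.mem_coe.1 (h ▸ ha))
        rw [hb, Function.update_self, Function.update_of_ne haq] at hab
        exact (hximg a (Finset.mem_coe.1 ha)) hab.symm
      · have haq : a ≠ q := fun h => hqG (Finset.mem_coe.1 (h ▸ ha))
        have hbq : b ≠ q := fun h => hqG (Finset.mem_coe.1 (h ▸ hb))
        rw [Function.update_of_ne haq, Function.update_of_ne hbq] at hab
        exact hpinj ha hb hab


lemma master [Nonempty X] (e : ℕ → X) (he : DenseRange e)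
    (β : ℕ → Set X)
    (hβbasis : ∀ (x : X) (U : Set X), IsOpen U → x ∈ U → ∃ n, x ∈ β n ∧ β n ⊆ U)
    (K : ℕ → Set X) (φ s : ℕ → C(X, ℝ))
    (hKsub : ∀ n, K n ⊆ β n)
    (hKsurj : ∀ n, ∀ t ∈ Icc (0:ℝ) 1, ∃ y ∈ K n, s n y = t)
    (hφ0 : ∀ n, ∀ x, x ∉ β n → φ n x = 0)
    (hφ1 : ∀ n, ∀ x, x ∈ K n → φ n x = 1)
    (g : C(X, ℝ)) (T : Finset X) (ε : ℝ) (hε : 0 < ε)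
    (G : Finset (Set X × ℝ)) (hG : ∀ q ∈ G, IsOpen q.1 ∧ q.1.Nonempty) :
    ∃ pr, (∀ t ∈ T, |bld e φ s pr t - g t| < ε) ∧
      ∀ q ∈ G, ∃ y ∈ q.1, bld e φ s pr y = q.2 := by
  classical
  obtain ⟨p, hp, hpinj⟩ := selA T G hG
  set P : Finset X := T ∪ G.image p with hPdef
  -- Step B : radii
  have selB : ∀ q : Set X × ℝ, ∃ ρ : ℝ, 0 < ρ ∧ (q ∈ G →
      Metric.ball (p q) ρ ⊆ q.1 ∧ ∀ y ∈ P, y ≠ p q → 3 * ρ ≤ dist (p q) y) := by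
    intro q
    by_cases hq : q ∈ G
    · obtain ⟨r₁, hr₁, hball⟩ := Metric.isOpen_iff.1 (hG q hq).1 (p q) (hp q hq).1
      by_cases hPne : (P.erase (p q)).Nonempty
      · have hδpos : 0 < (P.erase (p q)).inf' hPne (fun y => dist (p q) y) := by
          rw [Finset.lt_inf'_iff]
          intro y hy
          exact dist_pos.2 (Finset.mem_erase.1 hy).1.symm
        refine ⟨min r₁ ((P.erase (p q)).inf' hPne (fun y => dist (p q) y) / 3),
          lt_min hr₁ (by linarith), fun _ => ⟨?_, ?_⟩⟩
        · exact (Metric.ball_subset_ball (min_le_left _ _)).trans hball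
        · intro y hy hyne
          have h1 : (P.erase (p q)).inf' hPne (fun y => dist (p q) y) ≤ dist (p q) y :=
            Finset.inf'_le _ (Finset.mem_erase.2 ⟨hyne, hy⟩)
          have h2 := min_le_right r₁ ((P.erase (p q)).inf' hPne (fun y => dist (p q) y) / 3)
          linarith
      · refine ⟨r₁, hr₁, fun _ => ⟨hball, fun y hy hyne => ?_⟩⟩
        exact absurd ⟨y, Finset.mem_erase.2 ⟨hyne, hy⟩⟩ hPne
    · exact ⟨1, one_pos, fun h => absurd h hq⟩
  choose ρ hρpos hρspec using selB
  -- Step C : basic sets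
  have selC : ∀ q : Set X × ℝ, ∃ n : ℕ, q ∈ G →
      p q ∈ β n ∧ β n ⊆ Metric.ball (p q) (ρ q) := by
    intro q
    by_cases hq : q ∈ G
    · obtain ⟨n, hmem, hsub⟩ := hβbasis (p q) _ Metric.isOpen_ball
        (Metric.mem_ball_self (hρpos q))
      exact ⟨n, fun _ => ⟨hmem, hsub⟩⟩
    · exact ⟨0, fun h => absurd h hq⟩
  choose nq hnq using selC
  have hsubq : ∀ q ∈ G, β (nq q) ⊆ q.1 := fun q hq =>
    ((hnq q hq).2).trans (hρspec q hq).1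
  have hTout : ∀ q ∈ G, ∀ t ∈ T, t ∉ β (nq q) := by
    intro q hq t ht htmem
    have h1 : dist t (p q) < ρ q := Metric.mem_ball.1 ((hnq q hq).2 htmem)
    have htne : t ≠ p q := fun h => (hp q hq).2 (h ▸ ht)
    have h3 := (hρspec q hq).2 t (Finset.mem_union_left _ ht) htne
    rw [dist_comm] at h3
    linarith [hρpos q]
  have hdisj : ∀ q ∈ G, ∀ q' ∈ G, q ≠ q' → ∀ y ∈ β (nq q), y ∉ β (nq q') := by
    intro q hq q' hq' hne y hy hy'
    have h1 : dist y (p q) < ρ q := Metric.mem_ball.1 ((hnq q hq).2 hy)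
    have h2 : dist y (p q') < ρ q' := Metric.mem_ball.1 ((hnq q' hq').2 hy')
    have hpne : p q ≠ p q' := fun h => hne (hpinj (Finset.mem_coe.2 hq) (Finset.mem_coe.2 hq') h)
    have hd1 := (hρspec q hq).2 (p q')
      (Finset.mem_union_right _ (Finset.mem_image_of_mem p hq')) hpne.symm
    have hd2 := (hρspec q' hq').2 (p q)
      (Finset.mem_union_right _ (Finset.mem_image_of_mem p hq)) hpne
    rw [dist_comm] at hd2
    have htri := dist_triangle (p q) y (p q')
    rw [dist_comm (p q) y] at htri
    have hdp := dist_pos.2 hpne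
    linarith
  have hninj : ∀ q ∈ G, ∀ q' ∈ G, nq q = nq q' → q = q' := by
    intro q hq q' hq' hn
    by_contra hne
    exact hdisj q hq q' hq' hne (p q) (hnq q hq).1 (hn ▸ (hnq q hq).1)
  -- Step D : rational interval endpoints
  have selD : ∀ q : Set X × ℝ, ∃ ab : ℚ × ℚ, (ab.1 : ℝ) < q.2 ∧ q.2 < (ab.2 : ℝ) := by
    intro q
    obtain ⟨a, ha⟩ := exists_rat_lt q.2
    obtain ⟨b, hb⟩ := exists_rat_gt q.2
    exact ⟨(a, b), ha, hb⟩
  choose ab hab1 hab2 using selD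
  -- Step E : minimal pairwise distance in T and tent data
  have hδT : ∃ δ : ℝ, 0 < δ ∧ ∀ t ∈ T, ∀ t' ∈ T, t ≠ t' → δ ≤ dist t t' := by
    set S2 : Finset (X × X) := (T ×ˢ T).filter (fun pr : X × X => pr.1 ≠ pr.2) with hS2
    have hmemS2 : ∀ t ∈ T, ∀ t' ∈ T, t ≠ t' → (t, t') ∈ S2 := by
      intro t ht t' ht' hne
      rw [hS2, Finset.mem_filter]
      exact ⟨Finset.mem_product.2 ⟨ht, ht'⟩, hne⟩
    by_cases hT2 : S2.Nonempty
    · refine ⟨S2.inf' hT2 (fun pr => dist pr.1 pr.2), ?_, ?_⟩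
      · rw [Finset.lt_inf'_iff]
        rintro ⟨t, t'⟩ hmem
        rw [hS2, Finset.mem_filter] at hmem
        exact dist_pos.2 hmem.2
      · intro t ht t' ht' hne
        exact Finset.inf'_le _ (hmemS2 t ht t' ht' hne)
    · exact ⟨1, one_pos, fun t ht t' ht' hne =>
        absurd (hmemS2 t ht t' ht' hne) (fun h => hT2 ⟨_, h⟩)⟩
  obtain ⟨δ, hδpos, hδle⟩ := hδT
  obtain ⟨ρT, hρT0, hρT2⟩ := exists_rat_btwn (show (0:ℝ) < δ/2 by linarith)
  have selE : ∀ t : X, ∃ qk : ℚ × ℕ, t ∈ T →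
      |(qk.1 : ℝ) - g t| < ε/2 ∧
      dist (e qk.2) t < min ((ρT:ℝ)/4) ((ρT:ℝ) * ε / (2 * (|(qk.1:ℝ)| + 1))) := by
    intro t
    by_cases ht : t ∈ T
    · obtain ⟨q', hq'1, hq'2⟩ := exists_rat_btwn (show g t - ε/2 < g t by linarith)
      have habs : |(q' : ℝ) - g t| < ε/2 := abs_lt.2 ⟨by linarith, by linarith⟩
      have hμ : 0 < min ((ρT:ℝ)/4) ((ρT:ℝ) * ε / (2 * (|(q':ℝ)| + 1))) :=
        lt_min (by linarith) (div_pos (mul_pos hρT0 hε) (by positivity))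
      obtain ⟨k, hk⟩ := he.exists_dist_lt t hμ
      exact ⟨(q', k), fun _ => ⟨habs, by rwa [dist_comm]⟩⟩
    · exact ⟨(0, 0), fun h => absurd h ht⟩
  choose qk hqk using selE
  have hqkinj : ∀ t ∈ T, ∀ t' ∈ T, qk t = qk t' → t = t' := by
    intro t ht t' ht' heqk
    by_contra hne
    have h1 := ((hqk t ht).2).trans_le (min_le_left _ _)
    have h2 := ((hqk t' ht').2).trans_le (min_le_left _ _)
    rw [heqk] at h1
    have htri := dist_triangle t (e (qk t').2) t'
    rw [dist_comm t (e (qk t').2)] at htri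
    have hd := hδle t ht t' ht' hne
    linarith
  refine ⟨(T.image qk, ρT, G.image (fun q => (nq q, ab q))), ?_, ?_⟩
  · -- point conditions
    intro t ht
    rw [bld_apply']
    have hB : ∀ pp ∈ G.image (fun q => (nq q, ab q)), (φ pp.1) t = 0 := by
      intro pp hpp
      obtain ⟨q, hq, rfl⟩ := Finset.mem_image.1 hpp
      exact hφ0 _ t (hTout q hq t ht)
    rw [Finset.sum_eq_zero hB,
      Finset.sum_eq_zero (fun pp hpp => by rw [hB pp hpp, zero_mul] :
        ∀ pp ∈ G.image (fun q => (nq q, ab q)),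
          (φ pp.1) t * ((pp.2.1:ℝ) + ((pp.2.2:ℝ) - (pp.2.1:ℝ)) * (s pp.1) t) = 0),
      sub_zero, mul_one, add_zero]
    rw [Finset.sum_image (fun x hx y hy h => hqkinj x hx y hy h)]
    have hzero : ∀ t' ∈ T, t' ≠ t →
        ((qk t').1:ℝ) * max 0 (1 - dist t (e (qk t').2) / (ρT:ℝ)) = 0 := by
      intro t' ht' hne
      have h2 := ((hqk t' ht').2).trans_le (min_le_left _ _)
      have htri := dist_triangle t (e (qk t').2) t'
      have hd := hδle t' ht' t ht hne
      rw [dist_comm] at hd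
      have hnp : 1 - dist t (e (qk t').2) / (ρT:ℝ) ≤ 0 := by
        rw [sub_nonpos, le_div_iff₀ hρT0]
        linarith
      rw [max_eq_left hnp, mul_zero]
    rw [Finset.sum_eq_single_of_mem t ht hzero]
    · -- the single term estimate
      have hd := (hqk t ht).2
      rw [dist_comm] at hd
      have hd4 : dist t (e (qk t).2) < (ρT:ℝ)/4 := hd.trans_le (min_le_left _ _)
      have hdμ : dist t (e (qk t).2) < (ρT:ℝ) * ε / (2 * (|((qk t).1:ℝ)| + 1)) :=
        hd.trans_le (min_le_right _ _)
      have hdnn : (0:ℝ) ≤ dist t (e (qk t).2) := dist_nonneg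
      have hmax : max 0 (1 - dist t (e (qk t).2) / (ρT:ℝ)) =
          1 - dist t (e (qk t).2) / (ρT:ℝ) := by
        apply max_eq_right
        rw [sub_nonneg, div_le_one hρT0]
        linarith
      rw [hmax]
      have habs := (hqk t ht).1
      have key : 2 * |((qk t).1:ℝ)| * dist t (e (qk t).2) < (ρT:ℝ) * ε := by
        have h2 : dist t (e (qk t).2) * (2 * (|((qk t).1:ℝ)| + 1)) < (ρT:ℝ) * ε :=
          (lt_div_iff₀ (by positivity)).1 hdμ
        nlinarith [abs_nonneg (((qk t).1:ℝ))]
      have habs2 : |((qk t).1:ℝ) * (dist t (e (qk t).2) / (ρT:ℝ))| < ε/2 := by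
        rw [abs_mul, abs_of_nonneg (div_nonneg hdnn hρT0.le), mul_div_assoc',
          div_lt_iff₀ hρT0]
        linarith
      have hrw : ((qk t).1:ℝ) * (1 - dist t (e (qk t).2) / (ρT:ℝ)) - g t =
          (((qk t).1:ℝ) - g t) + (-(((qk t).1:ℝ) * (dist t (e (qk t).2) / (ρT:ℝ)))) := by
        ring
      rw [hrw]
      calc |(((qk t).1:ℝ) - g t) + (-(((qk t).1:ℝ) * (dist t (e (qk t).2) / (ρT:ℝ))))|
          ≤ |((qk t).1:ℝ) - g t| + |(-(((qk t).1:ℝ) * (dist t (e (qk t).2) / (ρT:ℝ))))| :=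
            abs_add_le _ _
        _ < ε := by rw [abs_neg]; linarith
  · -- hit conditions
    intro q hq
    have hba : (0:ℝ) < ((ab q).2:ℝ) - ((ab q).1:ℝ) := by
      have := hab1 q; have := hab2 q; linarith
    have hτ : (q.2 - ((ab q).1:ℝ)) / (((ab q).2:ℝ) - ((ab q).1:ℝ)) ∈ Icc (0:ℝ) 1 :=
      ⟨div_nonneg (by linarith [hab1 q]) hba.le, (div_le_one hba).2 (by linarith [hab2 q])⟩
    obtain ⟨y, hyK, hys⟩ := hKsurj (nq q) _ hτ
    have hyβ : y ∈ β (nq q) := hKsub (nq q) hyK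
    refine ⟨y, hsubq q hq hyβ, ?_⟩
    rw [bld_apply']
    have hφval : ∀ q' ∈ G, (φ (nq q')) y = if q' = q then 1 else 0 := by
      intro q' hq'
      by_cases h : q' = q
      · rw [if_pos h, h]
        exact hφ1 (nq q) y hyK
      · rw [if_neg h]
        exact hφ0 _ y (hdisj q hq q' hq' (fun hh => h hh.symm) y hyβ)
    have hsum : ∀ f : ℕ × ℚ × ℚ → ℝ,
        ∑ pp ∈ G.image (fun q => (nq q, ab q)), f pp = ∑ q' ∈ G, f (nq q', ab q') := by
      intro f
      rw [Finset.sum_image]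
      intro x hx y' hy' h
      exact hninj x hx y' hy' (congrArg Prod.fst h)
    have hB1 : ∑ pp ∈ G.image (fun q => (nq q, ab q)), (φ pp.1) y = 1 := by
      rw [hsum (fun pp => (φ pp.1) y),
        Finset.sum_congr rfl (fun q' hq' => hφval q' hq'),
        Finset.sum_ite_eq' G q (fun _ => (1:ℝ)), if_pos hq]
    have hC1 : ∑ pp ∈ G.image (fun q => (nq q, ab q)),
        (φ pp.1) y * ((pp.2.1:ℝ) + ((pp.2.2:ℝ) - (pp.2.1:ℝ)) * (s pp.1) y) = q.2 := by
      rw [hsum (fun pp => (φ pp.1) y * ((pp.2.1:ℝ) + ((pp.2.2:ℝ) - (pp.2.1:ℝ)) * (s pp.1) y))]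
      have hterm : ∀ q' ∈ G,
          (φ (nq q')) y * (((ab q').1:ℝ) + (((ab q').2:ℝ) - ((ab q').1:ℝ)) * (s (nq q')) y)
          = if q' = q then q.2 else 0 := by
        intro q' hq'
        rw [hφval q' hq']
        by_cases h : q' = q
        · rw [if_pos h, if_pos h, one_mul, h, hys]
          field_simp
          ring
        · rw [if_neg h, if_neg h, zero_mul]
      rw [Finset.sum_congr rfl hterm, Finset.sum_ite_eq' G q (fun _ => q.2), if_pos hq]
    rw [hB1, hC1]
    ring

theorem main [CompleteSpace X] [SecondCountableTopology X] [Nonempty X] :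
    @SeparableSpace C(X, ℝ) (biPointOpenTopology X) := by
  classical
  -- enumerate a countable basis
  have hBne : (countableBasis X).Nonempty := by
    obtain ⟨B, hB, -⟩ := (isBasis_countableBasis X).exists_subset_of_mem_open
      (mem_univ (Classical.arbitrary X)) isOpen_univ
    exact ⟨B, hB⟩
  obtain ⟨β, hβ⟩ := Set.Countable.exists_eq_range (countable_countableBasis X) hBne
  have hβopen : ∀ n, IsOpen (β n) := fun n =>
    isOpen_of_mem_countableBasis (by rw [hβ]; exact mem_range_self n)
  have hβne : ∀ n, (β n).Nonempty := fun n =>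
    nonempty_of_mem_countableBasis (by rw [hβ]; exact mem_range_self n)
  have hβbasis : ∀ (x : X) (U : Set X), IsOpen U → x ∈ U → ∃ n, x ∈ β n ∧ β n ⊆ U := by
    intro x U hU hx
    obtain ⟨B, hB, hxB, hBU⟩ := (isBasis_countableBasis X).exists_subset_of_mem_open hx hU
    rw [hβ] at hB
    obtain ⟨n, rfl⟩ := hB
    exact ⟨n, hxB, hBU⟩
  -- 𝓘-set data on each basic set
  choose K s hKclosed hKsub hKsurj using fun n => exists_ISet (hβopen n) (hβne n)
  -- bump functions
  have hbump : ∀ n, ∃ φ : C(X, ℝ), EqOn φ 0 (β n)ᶜ ∧ EqOn φ 1 (K n) ∧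
      ∀ x, φ x ∈ Icc (0:ℝ) 1 := fun n =>
    exists_continuous_zero_one_of_isClosed (hβopen n).isClosed_compl (hKclosed n)
      (disjoint_compl_left.mono_right (hKsub n))
  choose φ hφ0' hφ1' hφmem using hbump
  have hφ0 : ∀ n, ∀ x, x ∉ β n → φ n x = 0 := by
    intro n x hx
    have := hφ0' n (show x ∈ (β n)ᶜ from hx)
    simpa using this
  have hφ1 : ∀ n, ∀ x, x ∈ K n → φ n x = 1 := by
    intro n x hx
    have := hφ1' n hx
    simpa using this
  -- dense sequence
  obtain ⟨e, he⟩ := exists_dense_seq X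
  -- apply the subbasis criterion
  refine separable_of_subbasis _ (Set.range (bld e φ s)) (countable_range _) ?_
  intro F hF hne
  obtain ⟨g, hg⟩ := hne
  -- reduce the finite intersection to point/hit conditions
  have claim : ∀ F : Finset (Set C(X, ℝ)), ↑F ⊆
      ({S | ∃ (x : X) (U : Set ℝ), IsOpen U ∧ S = {f : C(X, ℝ) | f x ∈ U}} ∪
       {S | ∃ (V : Set X) (r : ℝ), IsOpen V ∧ S = {f : C(X, ℝ) | ∃ x ∈ V, f x = r}}) →
      g ∈ ⋂₀ (↑F : Set (Set C(X, ℝ))) →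
      ∃ (T : Finset X) (ε : ℝ), 0 < ε ∧ ∃ G : Finset (Set X × ℝ),
        (∀ q ∈ G, IsOpen q.1 ∧ q.1.Nonempty) ∧
        ∀ d : C(X, ℝ), (∀ t ∈ T, |d t - g t| < ε) → (∀ q ∈ G, ∃ y ∈ q.1, d y = q.2) →
          d ∈ ⋂₀ (↑F : Set (Set C(X, ℝ))) := by
    intro F
    induction F using Finset.induction_on with
    | empty =>
      intro _ _
      exact ⟨∅, 1, one_pos, ∅, by simp, by simp⟩
    | @insert A F hA ih =>
      intro hsub hgmem
      have hgF : g ∈ ⋂₀ (↑F : Set (Set C(X, ℝ))) := fun S hS =>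
        hgmem S (Finset.mem_coe.2 (Finset.mem_insert_of_mem (Finset.mem_coe.1 hS)))
      obtain ⟨T, ε, hε, G, hG, hd⟩ := ih
        (fun S hS => hsub (Finset.mem_coe.2 (Finset.mem_insert_of_mem (Finset.mem_coe.1 hS)))) hgF
      have hgA : g ∈ A := hgmem A (Finset.mem_coe.2 (Finset.mem_insert_self A F))
      have hAmem := hsub (Finset.mem_coe.2 (Finset.mem_insert_self A F))
      rcases hAmem with h1 | h2
      · obtain ⟨x, U, hU, rfl⟩ := h1
        have hgx : g x ∈ U := hgA
        obtain ⟨ε', hε', hball⟩ := Metric.isOpen_iff.1 hU (g x) hgx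
        refine ⟨insert x T, min ε ε', lt_min hε hε', G, hG, ?_⟩
        intro d hdT hdG S hS
        rcases Finset.mem_insert.1 (Finset.mem_coe.1 hS) with rfl | hS
        · apply hball
          rw [Metric.mem_ball, Real.dist_eq]
          exact lt_of_lt_of_le (hdT x (Finset.mem_insert_self x T)) (min_le_right _ _)
        · exact hd d (fun t ht => lt_of_lt_of_le (hdT t (Finset.mem_insert_of_mem ht))
            (min_le_left _ _)) hdG S (Finset.mem_coe.2 hS)
      · obtain ⟨V, r, hV, rfl⟩ := h2
        obtain ⟨y, hyV, -⟩ := hgA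
        refine ⟨T, ε, hε, insert (V, r) G, ?_, ?_⟩
        · intro q hq
          rcases Finset.mem_insert.1 hq with rfl | hq'
          · exact ⟨hV, ⟨y, hyV⟩⟩
          · exact hG q hq'
        · intro d hdT hdG S hS
          rcases Finset.mem_insert.1 (Finset.mem_coe.1 hS) with rfl | hS
          · exact hdG (V, r) (Finset.mem_insert_self _ _)
          · exact hd d hdT (fun q hq => hdG q (Finset.mem_insert_of_mem hq)) S (Finset.mem_coe.2 hS)
  obtain ⟨T, ε, hε, G, hG, hcond⟩ := claim F hF hg
  obtain ⟨pr, h1, h2⟩ := master e he β hβbasis K φ s hKsub hKsurj hφ0 hφ1 g T ε hε G hG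
  exact ⟨bld e φ s pr, mem_range_self pr, hcond _ h1 h2⟩


end Stmt8Aux

/-- If `X` is a nonempty perfect Polish space, then `C_ph(X)` is separable. -/
theorem stmt8 {X : Type*} [TopologicalSpace X] [PolishSpace X] [PerfectSpace X] [Nonempty X] :
    @SeparableSpace C(X, ℝ) (biPointOpenTopology X) := by
  letI := upgradeIsCompletelyMetrizable X
  exact Stmt8Aux.main
end

section
/- Assume hypothesis (M): every subset of ℝ of cardinality 𝔠 admits a continuous surjection onto the closed interval [0,1]. Then every separable metrizable space M of cardinality 𝔠 admits a continuous function f : M → ℝ such that f(M) contains the closed interval [0,1]. -/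
open TopologicalSpace Set Topology

/-- Auxiliary: in a separable metric space where every continuous real-valued function has
image of cardinality less than the continuum, there is a continuous injection into `ℝ`. -/
lemma exists_continuous_injective_of_small_images {M : Type*} [MetricSpace M]
    [SeparableSpace M] [Nonempty M]
    (small : ∀ f : M → ℝ, Continuous f → Cardinal.mk (Set.range f) < Cardinal.continuum) :
    ∃ F : M → ℝ, Continuous F ∧ Function.Injective F := by
  classical
  obtain ⟨u, hu⟩ := TopologicalSpace.exists_dense_seq M
  -- for each (n, q, q') choose a value `c` missed by `dist · (u n)`, inside `(q, q')` if possible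
  have key : ∀ i : ℕ × ℚ × ℚ, ∃ c : ℝ, (∀ z : M, dist z (u i.1) ≠ c) ∧
      ((i.2.1 : ℝ) < (i.2.2 : ℝ) → c ∈ Ioo (i.2.1 : ℝ) (i.2.2 : ℝ)) := by
    intro i
    by_cases h : (i.2.1 : ℝ) < (i.2.2 : ℝ)
    · have hfc : Continuous fun z : M => dist z (u i.1) := continuous_id.dist continuous_const
      have h1 := small _ hfc
      have h2 : ¬ (Ioo (i.2.1 : ℝ) (i.2.2 : ℝ) ⊆ Set.range fun z : M => dist z (u i.1)) := by
        intro hsub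
        have hle := Cardinal.mk_le_mk_of_subset hsub
        rw [Cardinal.mk_Ioo_real h] at hle
        exact absurd (hle.trans_lt h1) (lt_irrefl _)
      obtain ⟨c, hc1, hc2⟩ := Set.not_subset.mp h2
      exact ⟨c, fun z hz => hc2 ⟨z, hz⟩, fun _ => hc1⟩
    · refine ⟨-1, fun z hz => ?_, fun h' => absurd h' h⟩
      have := dist_nonneg (x := z) (y := u i.1)
      linarith
  choose c hc1 hc2 using key
  set C : ℕ × ℚ × ℚ → Set M := fun i => {z | dist z (u i.1) < c i} with hC
  have hopen : ∀ i, IsOpen (C i) := fun i =>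
    isOpen_lt (continuous_id.dist continuous_const) continuous_const
  have hclosed : ∀ i, IsClosed (C i) := by
    intro i
    have hEq : C i = {z | dist z (u i.1) ≤ c i} := by
      ext z
      simp only [hC, Set.mem_setOf_eq]
      exact ⟨le_of_lt, fun h => lt_of_le_of_ne h (hc1 i z)⟩
    rw [hEq]
    exact isClosed_le (continuous_id.dist continuous_const) continuous_const
  have hclopen : ∀ i, IsClopen (C i) := fun i => ⟨hclosed i, hopen i⟩
  -- separation
  have hsep : ∀ x y : M, x ≠ y → ∃ i, x ∈ C i ∧ y ∉ C i := by
    intro x y hxy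
    set d0 := dist x y with hd0
    have hd0pos : 0 < d0 := dist_pos.mpr hxy
    obtain ⟨n, hn⟩ := hu.exists_dist_lt x (show (0:ℝ) < d0 / 4 by linarith)
    obtain ⟨q, hq1, hq2⟩ := exists_rat_btwn (show d0 / 4 < d0 / 2 by linarith)
    obtain ⟨q', hq'1, hq'2⟩ := exists_rat_btwn (show (q : ℝ) < 3 * d0 / 4 by linarith)
    refine ⟨(n, q, q'), ?_, ?_⟩
    · have hcmem := hc2 (n, q, q') hq'1
      have : dist x (u n) < c (n, q, q') := lt_trans (lt_trans hn hq1) hcmem.1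
      exact this
    · intro hmem
      have hcmem := hc2 (n, q, q') hq'1
      have h1 : dist y (u n) < c (n, q, q') := hmem
      have h2 : c (n, q, q') < 3 * d0 / 4 := lt_trans hcmem.2 hq'2
      have h3 : dist x y ≤ dist x (u n) + dist (u n) y := dist_triangle x (u n) y
      have h4 : dist (u n) y = dist y (u n) := dist_comm _ _
      linarith
  -- the Cantor-style map
  set b : M → ℕ → Bool := fun x n =>
    (Encodable.decode₂ (ℕ × ℚ × ℚ) n).elim false fun i => decide (x ∈ C i) with hb
  set F : M → ℝ := fun x => Cardinal.cantorFunction (1/3) (b x) with hF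
  have hb_enc : ∀ (x : M) (i : ℕ × ℚ × ℚ),
      b x (Encodable.encode i) = decide (x ∈ C i) := by
    intro x i
    simp only [hb, Encodable.decode₂_encode, Option.elim]
  refine ⟨F, ?_, ?_⟩
  · -- continuity
    have : Continuous fun x => ∑' n, Cardinal.cantorFunctionAux (1/3) (b x) n := by
      apply continuous_tsum (u := fun n => (1/3 : ℝ) ^ n)
      · intro n
        rcases h : Encodable.decode₂ (ℕ × ℚ × ℚ) n with _ | i
        · have : (fun x : M => Cardinal.cantorFunctionAux (1/3) (b x) n) = fun _ => 0 := by
            funext x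
            simp [Cardinal.cantorFunctionAux, hb, h]
          rw [this]; exact continuous_const
        · have hEq : (fun x : M => Cardinal.cantorFunctionAux (1/3) (b x) n) =
              fun x => if x ∈ C i then (1/3 : ℝ) ^ n else 0 := by
            funext x
            by_cases hx : x ∈ C i <;>
              simp [Cardinal.cantorFunctionAux, hb, h, hx]
          rw [hEq]
          apply Continuous.if ?_ continuous_const continuous_const
          intro a ha
          have : frontier {x : M | x ∈ C i} = ∅ := (hclopen i).frontier_eq
          rw [this] at ha
          exact absurd ha (Set.notMem_empty a)
      · exact summable_geometric_of_lt_one (by norm_num) (by norm_num)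
      · intro n x
        rw [Real.norm_eq_abs]
        rcases hbx : b x n with _ | _
        · rw [Cardinal.cantorFunctionAux_false hbx, abs_zero]
          positivity
        · rw [Cardinal.cantorFunctionAux_true hbx, abs_of_nonneg (by positivity)]
    exact this
  · -- injectivity
    intro x y hFxy
    by_contra hxy
    have hbeq : b x = b y :=
      Cardinal.cantorFunction_injective (by norm_num) (by norm_num) hFxy
    obtain ⟨i, hxi, hyi⟩ := hsep x y hxy
    have h1 : b x (Encodable.encode i) = true := by rw [hb_enc]; exact decide_eq_true hxi
    have h2 : b y (Encodable.encode i) = false := by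
      rw [hb_enc]; exact decide_eq_false hyi
    rw [hbeq, h2] at h1
    exact Bool.false_ne_true h1

/-- Under hypothesis (M), every separable metrizable space of cardinality 𝔠
admits a continuous real-valued map whose image contains `[0,1]`. -/
theorem stmt12 (hM : HypothesisM) {M : Type*} [TopologicalSpace M] [MetrizableSpace M]
    [SeparableSpace M] (hcard : Cardinal.mk M = Cardinal.continuum) :
    ∃ f : M → ℝ, Continuous f ∧ Icc (0 : ℝ) 1 ⊆ Set.range f := by
  letI : MetricSpace M := TopologicalSpace.metrizableSpaceMetric M
  have hne : Nonempty M := by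
    rw [← Cardinal.mk_ne_zero_iff]
    rw [hcard]
    exact Cardinal.continuum_ne_zero
  -- find a continuous map with image of cardinality continuum
  obtain ⟨f, hf, hfc⟩ : ∃ f : M → ℝ, Continuous f ∧
      Cardinal.mk (Set.range f) = Cardinal.continuum := by
    by_contra hcon
    push_neg at hcon
    have small : ∀ f : M → ℝ, Continuous f →
        Cardinal.mk (Set.range f) < Cardinal.continuum := by
      intro f hf
      refine lt_of_le_of_ne ?_ (hcon f hf)
      rw [← Cardinal.mk_real]
      exact Cardinal.mk_set_le _
    obtain ⟨F, hFcont, hFinj⟩ := exists_continuous_injective_of_small_images small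
    have h0 := Cardinal.mk_range_eq_of_injective hFinj
    have h1 : Cardinal.continuum ≤ Cardinal.lift.{0} (Cardinal.mk M) :=
      Cardinal.continuum_le_lift.mpr hcard.ge
    rw [← h0] at h1
    exact absurd (Cardinal.continuum_le_lift.mp h1) (not_le.mpr (small F hFcont))
  obtain ⟨g, hg, hgr⟩ := hM (Set.range f) hfc
  refine ⟨g ∘ Set.rangeFactorization f, hg.comp (Continuous.subtype_mk hf _), ?_⟩
  rw [Function.Surjective.range_comp Set.rangeFactorization_surjective g, hgr]
end

section
/- Assume hypothesis (M): every subset of ℝ of cardinality 𝔠 admits a continuous surjection onto the closed interval [0,1]. Let X be a nonempty separable metrizable space. Then C_ph(X) is separable if and only if Δ(X) = 𝔠. -/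
open TopologicalSpace Set Topology

open Cardinal
open scoped Classical

universe u

section Aux
variable {X : Type*} [TopologicalSpace X]

lemma mk_le_continuum_of_t0_secondCountable [T0Space X] [SecondCountableTopology X] :
    Cardinal.mk X ≤ Cardinal.continuum := by
  classical
  set B := countableBasis X with hB
  have hcb : B.Countable := countable_countableBasis X
  have hset : #(Set ↥B) ≤ Cardinal.continuum := by
    rw [Cardinal.mk_set, Cardinal.continuum]
    exact Cardinal.power_le_power_left (by norm_num) (Cardinal.mk_le_aleph0_iff.2 hcb.to_subtype)
  refine le_trans (Cardinal.mk_le_of_injective (f := fun x => {s : ↥B | x ∈ (s : Set X)}) ?_) hset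
  intro x y hxy
  have hb := isBasis_countableBasis X
  refine ((hb.inseparable_iff (x := x) (y := y)).2 ?_).eq
  intro s hs
  have h1 : (⟨s, hs⟩ : ↥B) ∈ {s : ↥B | x ∈ (s : Set X)} ↔ (⟨s, hs⟩ : ↥B) ∈ {s : ↥B | y ∈ (s : Set X)} := by
    simp only at hxy; rw [hxy]
  simpa using h1

lemma forward_card (hsep : @SeparableSpace C(X, ℝ) (biPointOpenTopology X))
    (U : Set X) (hU : IsOpen U) (hne : U.Nonempty) : Cardinal.continuum ≤ #U := by
  classical
  obtain ⟨D, hDc, hDd⟩ := @TopologicalSpace.exists_countable_dense C(X, ℝ) (biPointOpenTopology X) hsep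
  have hopen : ∀ r : ℝ, IsOpen[biPointOpenTopology X] {f : C(X, ℝ) | ∃ x ∈ U, f x = r} := by
    intro r
    exact TopologicalSpace.isOpen_generateFrom_of_mem (Or.inr ⟨U, r, hU, rfl⟩)
  have hkey : ∀ r : ℝ, ∃ f ∈ D, ∃ x ∈ U, f x = r := by
    intro r
    obtain ⟨x0, hx0⟩ := hne
    have hne' : {f : C(X, ℝ) | ∃ x ∈ U, f x = r}.Nonempty :=
      ⟨ContinuousMap.const X r, x0, hx0, rfl⟩
    obtain ⟨f, hf1, hf2⟩ := @Dense.inter_open_nonempty C(X, ℝ) (biPointOpenTopology X) D hDd {f : C(X, ℝ) | ∃ x ∈ U, f x = r} (hopen r) hne'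
    exact ⟨f, hf2, hf1⟩
  have hsurj : Function.Surjective (fun p : ↥D × ↥U => ULift.up.{_, 0} ((p.1 : C(X, ℝ)) (p.2 : X))) := by
    rintro ⟨r⟩
    obtain ⟨f, hf, x, hx, hfx⟩ := hkey r
    exact ⟨(⟨f, hf⟩, ⟨x, hx⟩), congrArg ULift.up hfx⟩
  have h1 : Cardinal.continuum ≤ #(↥D × ↥U) := by
    have := Cardinal.mk_le_of_surjective hsurj
    rwa [Cardinal.mk_uLift, Cardinal.mk_real, Cardinal.lift_continuum] at this
  have h2 : #(↥D × ↥U) ≤ Cardinal.aleph0 * #U := by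
    rw [Cardinal.mk_prod, Cardinal.lift_id, Cardinal.lift_id]
    exact mul_le_mul_left (Cardinal.mk_le_aleph0_iff.2 hDc.to_subtype) _
  have h3 : Cardinal.continuum ≤ max (max Cardinal.aleph0 (#U)) Cardinal.aleph0 :=
    le_trans (h1.trans h2) (Cardinal.mul_le_max _ _)
  rw [sup_comm, ← sup_assoc, sup_idem] at h3
  rcases max_choice Cardinal.aleph0 (#U) with h | h <;> rw [h] at h3
  · exact absurd h3 (not_le.2 Cardinal.aleph0_lt_continuum)
  · exact h3

lemma dispersion_eq_continuum [Nonempty X] (hle : #X ≤ Cardinal.continuum)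
    (h : ∀ U : Set X, IsOpen U → U.Nonempty → Cardinal.continuum ≤ #U) :
    dispersionCharacter X = Cardinal.continuum := by
  apply le_antisymm
  · refine le_trans (csInf_le' ⟨univ, isOpen_univ, univ_nonempty, rfl⟩) ?_
    rwa [Cardinal.mk_univ]
  · refine le_csInf ⟨#(univ : Set X), univ, isOpen_univ, univ_nonempty, rfl⟩ ?_
    rintro c ⟨U, hU, hne, rfl⟩
    exact h U hU hne

lemma card_open_of_dispersion [Nonempty X] (hle : #X ≤ Cardinal.continuum)
    (hd : dispersionCharacter X = Cardinal.continuum)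
    (U : Set X) (hU : IsOpen U) (hne : U.Nonempty) : #U = Cardinal.continuum := by
  refine le_antisymm (le_trans (Cardinal.mk_set_le U) hle) ?_
  rw [← hd]
  exact csInf_le' ⟨U, hU, hne, rfl⟩

end Aux

lemma continuous_ite_clopen {S : Type*} [TopologicalSpace S] {V : Set S} (hV : IsClopen V) (r : ℝ) :
    Continuous fun x => if x ∈ V then r else (0 : ℝ) := by
  classical
  rw [continuous_iff_continuousAt]
  intro x
  by_cases hx : x ∈ V
  · refine Filter.EventuallyEq.continuousAt (y := r) ?_
    exact Filter.eventually_of_mem (hV.2.mem_nhds hx) fun y hy => by simp [hy]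
  · refine Filter.EventuallyEq.continuousAt (y := (0:ℝ)) ?_
    exact Filter.eventually_of_mem (hV.1.isOpen_compl.mem_nhds hx) fun y hy => by
      simp [(Set.mem_compl_iff _ _).1 hy]

lemma exists_cont_large_range (S : Type u) [MetricSpace S] [SeparableSpace S] [Nonempty S]
    (hS : Cardinal.continuum ≤ #S) :
    ∃ f : S → ℝ, Continuous f ∧ Cardinal.continuum ≤ #(range f) := by
  classical
  obtain ⟨Q, hQc, hQd⟩ := TopologicalSpace.exists_countable_dense S
  obtain ⟨q, hq⟩ := hQc.exists_eq_range (hQd.nonempty)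
  set e : ℕ → S → ℝ := fun n x => dist x (q n) with he
  by_cases hcase : ∃ n, Cardinal.continuum ≤ #(range (e n))
  · obtain ⟨n, hn⟩ := hcase
    exact ⟨e n, (continuous_id.dist continuous_const), hn⟩
  push_neg at hcase
  have hcut : ∀ p : ℕ × ℚ × ℚ, ∃ c : ℝ, (p.2.1 : ℝ) < (p.2.2 : ℝ) →
      ((p.2.1 : ℝ) < c ∧ c < (p.2.2 : ℝ) ∧ c ∉ range (e p.1)) := by
    rintro ⟨n, p, q'⟩
    by_cases hpq : (p : ℝ) < (q' : ℝ)
    · have : ¬ (Ioo (p : ℝ) (q' : ℝ) ⊆ range (e n)) := by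
        intro hsub
        have := (Cardinal.mk_le_mk_of_subset hsub)
        rw [Cardinal.mk_Ioo_real hpq] at this
        exact absurd this (not_le.2 (hcase n))
      obtain ⟨c, hc1, hc2⟩ := not_subset.1 this
      exact ⟨c, fun _ => ⟨hc1.1, hc1.2, hc2⟩⟩
    · exact ⟨0, fun h => absurd h hpq⟩
  choose cut hcut using hcut
  set E := Denumerable.eqv (ℕ × ℚ × ℚ) with hE
  set σ : ℕ → ℕ × ℚ × ℚ := fun k => E.symm k with hσ
  set U : ℕ → Set S := fun k =>
    if ((σ k).2.1 : ℝ) < ((σ k).2.2 : ℝ) then {x | e (σ k).1 x < cut (σ k)} else ∅ with hU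
  have hUclopen : ∀ k, IsClopen (U k) := by
    intro k
    rw [hU]
    dsimp only
    split_ifs with h
    · constructor
      · have heq : {x | e (σ k).1 x < cut (σ k)} = {x | e (σ k).1 x ≤ cut (σ k)} := by
          ext x
          simp only [mem_setOf_eq]
          refine ⟨le_of_lt, fun hle => ?_⟩
          rcases lt_or_eq_of_le hle with h' | h'
          · exact h'
          · exact absurd ⟨x, h'⟩ (hcut _ h).2.2
        rw [heq]
        exact isClosed_le (continuous_id.dist continuous_const) continuous_const
      · exact isOpen_lt (continuous_id.dist continuous_const) continuous_const
    · exact isClopen_empty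
  have hsepU : ∀ x y : S, x ≠ y → ∃ k, x ∈ U k ∧ y ∉ U k := by
    intro x y hxy
    have hd : 0 < dist x y := dist_pos.2 hxy
    obtain ⟨z, hz⟩ := Metric.dense_iff.1 hQd x (dist x y / 2) (by linarith)
    obtain ⟨n, rfl⟩ : ∃ n, q n = z := by
      have := hz.2; rw [hq] at this; exact this
    have hxn : e n x < dist x y / 2 := by
      have := hz.1
      rw [Metric.mem_ball, dist_comm] at this
      simpa [he] using this
    have hyn : dist x y / 2 < e n y := by
      have h1 := dist_triangle x y (q n)
      have h2 : dist y (q n) = e n y := rfl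
      simp only [he]
      have := dist_triangle y x (q n)
      -- dist x y ≤ dist x (q n) + dist (q n) y
      have h3 : dist x y ≤ dist x (q n) + dist y (q n) := by
        rw [dist_comm y (q n)]
        exact dist_triangle x (q n) y |>.trans (by rw [dist_comm (q n) y])
      have hq' : dist x (q n) < dist x y / 2 := by
        have := hz.1; rw [Metric.mem_ball, dist_comm] at this; exact this
      linarith
    obtain ⟨p, hp1, hp2⟩ := exists_rat_btwn (hxn.trans hyn)
    obtain ⟨p', hp'1, hp'2⟩ := exists_rat_btwn hp2
    obtain ⟨kk, hkk⟩ : ∃ kk : ℕ, σ kk = (n, p, p') :=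
      ⟨E (n, p, p'), by rw [hσ]; exact E.symm_apply_apply _⟩
    have hlt : ((p:ℝ)) < ((p':ℝ)) := hp'1
    have hcc := hcut (n, p, p') hlt
    refine ⟨kk, ?_, ?_⟩
    · rw [hU]; dsimp only; rw [hkk]
      rw [if_pos hlt]
      exact lt_trans hp1 hcc.1
    · rw [hU]; dsimp only; rw [hkk]
      rw [if_pos hlt]
      intro hmem
      exact absurd (lt_trans hmem hcc.2.1) (not_lt.2 hp'2.le)
  -- now build the injection via the Cantor function
  set g : S → ℕ → Bool := fun x k => decide (x ∈ U k) with hg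
  set F : S → ℝ := fun x => Cardinal.cantorFunction (1/3) (g x) with hF
  have hFinj : Function.Injective F := by
    intro x y hxyF
    by_contra hne
    obtain ⟨k, hk1, hk2⟩ := hsepU x y hne
    have : g x = g y := Cardinal.cantorFunction_injective (by norm_num) (by norm_num) hxyF
    have hgx : g x k = true := by simp [hg, hk1]
    have hgy : g y k = false := by simp [hg, hk2]
    rw [this] at hgx
    rw [hgx] at hgy
    exact Bool.noConfusion hgy
  have hFcont : Continuous F := by
    have heqF : F = fun x => ∑' k, (if x ∈ U k then ((1:ℝ)/3) ^ k else 0) := by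
      funext x
      rw [hF]
      dsimp only
      rw [Cardinal.cantorFunction]
      congr 1
      funext k
      by_cases hx : x ∈ U k
      · simp [Cardinal.cantorFunctionAux, hg, hx]
      · simp [Cardinal.cantorFunctionAux, hg, hx]
    rw [heqF]
    refine continuous_tsum (u := fun k => ((1:ℝ)/3) ^ k) ?_ ?_ ?_
    · intro k
      exact continuous_ite_clopen (hUclopen k) _
    · exact summable_geometric_of_lt_one (by norm_num) (by norm_num)
    · intro k x
      by_cases hx : x ∈ U k <;> simp [hx] <;> positivity
  refine ⟨F, hFcont, ?_⟩
  rw [← Cardinal.lift_le.{u}, Cardinal.lift_continuum, Cardinal.mk_range_eq_lift hFinj]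
  simpa using hS

lemma exists_surj_onto_Icc (hM : HypothesisM) (S : Type u) [MetricSpace S] [SeparableSpace S]
    [Nonempty S] (hS : Cardinal.continuum ≤ #S) :
    ∃ s : S → ℝ, Continuous s ∧ Icc (0:ℝ) 1 ⊆ range s := by
  obtain ⟨f, hfc, hfr⟩ := exists_cont_large_range S hS
  have hA : Cardinal.mk (range f) = Cardinal.continuum :=
    le_antisymm (le_trans (Cardinal.mk_set_le _) (le_of_eq Cardinal.mk_real)) hfr
  obtain ⟨g, hgc, hgr⟩ := hM (range f) hA
  refine ⟨g ∘ Set.rangeFactorization f, hgc.comp (Continuous.subtype_mk hfc _), ?_⟩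
  rw [Set.range_comp, Set.rangeFactorization_surjective.range_eq, Set.image_univ, hgr]

lemma bump_data (hM : HypothesisM) {X : Type u} [MetricSpace X] [SeparableSpace X]
    (hcard : ∀ U : Set X, IsOpen U → U.Nonempty → Cardinal.continuum ≤ #U)
    (B : Set X) (hB : IsOpen B) (hne : B.Nonempty) :
    ∃ (φ Sf : C(X, ℝ)) (C O : Set X), C ⊆ O ∧ O ⊆ B ∧ IsOpen O ∧
      (∀ x ∈ C, φ x = 1) ∧ (∀ x ∉ O, φ x = 0) ∧ Icc (0:ℝ) 1 ⊆ Sf '' C := by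
  obtain ⟨x0, hx0⟩ := hne
  obtain ⟨r, hr, hball⟩ := Metric.isOpen_iff.1 hB x0 hx0
  set ε := r/3 with hε
  have hε0 : 0 < ε := by rw [hε]; linarith
  set C := Metric.closedBall x0 ε with hC
  set O := Metric.ball x0 (2*ε) with hO
  have hCO : C ⊆ O := Metric.closedBall_subset_ball (by linarith)
  have hOB : O ⊆ B := le_trans (Metric.ball_subset_ball (by rw [hε]; linarith)) hball
  have hCclosed : IsClosed C := Metric.isClosed_closedBall
  have hdisj : Disjoint Oᶜ C := Set.disjoint_left.2 fun x hx hxC => hx (hCO hxC)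
  obtain ⟨φ, hφ0, hφ1, hφmem⟩ :=
    exists_continuous_zero_one_of_isClosed (Metric.isOpen_ball.isClosed_compl) hCclosed hdisj
  haveI : SecondCountableTopology X := UniformSpace.secondCountable_of_separable X
  haveI : Nonempty ↥C := ⟨⟨x0, Metric.mem_closedBall_self hε0.le⟩⟩
  haveI : SeparableSpace ↥C := TopologicalSpace.SecondCountableTopology.to_separableSpace
  have hcC : Cardinal.continuum ≤ #↥C := by
    refine le_trans (hcard (Metric.ball x0 ε) Metric.isOpen_ball ⟨x0, Metric.mem_ball_self hε0⟩) ?_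
    exact Cardinal.mk_le_mk_of_subset Metric.ball_subset_closedBall
  obtain ⟨s, hsc, hsr⟩ := exists_surj_onto_Icc hM ↥C hcC
  obtain ⟨Sf, hSf⟩ := ContinuousMap.exists_restrict_eq hCclosed (⟨s, hsc⟩ : C(↥C, ℝ))
  refine ⟨φ, Sf, C, O, hCO, hOB, Metric.isOpen_ball, fun x hx => hφ1 hx, fun x hx => hφ0 hx, ?_⟩
  intro t ht
  obtain ⟨c, hc⟩ := hsr ht
  refine ⟨c.1, c.2, ?_⟩
  have := congrArg (fun f => ContinuousMap.toFun f c) hSf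
  simpa using (by simpa using this : Sf c.1 = s c).trans hc

section bumps
variable {X : Type*} [MetricSpace X]

noncomputable def bmp (p : X) (ρ : ℝ) : C(X, ℝ) :=
  ⟨fun x => max 0 (1 - dist x p / ρ),
    continuous_const.max ((continuous_const.sub ((continuous_id.dist continuous_const).div_const ρ)))⟩

noncomputable def bumpsum (q : ℕ → X) : List (ℕ × ℚ × ℚ) → C(X, ℝ)
  | [] => 0
  | t :: l => ContinuousMap.const X (t.2.2 : ℝ) * bmp (q t.1) (t.2.1 : ℝ) + bumpsum q l

lemma bumpsum_apply (q : ℕ → X) (l : List (ℕ × ℚ × ℚ)) (x : X) :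
    bumpsum q l x = (l.map fun t => (t.2.2 : ℝ) * bmp (q t.1) (t.2.1 : ℝ) x).sum := by
  induction l with
  | nil => simp [bumpsum]
  | cons t l ih => simp [bumpsum, ih]

lemma bmp_eq_zero {p : X} {ρ : ℝ} {x : X} (h : ρ ≤ dist x p) (hρ : 0 < ρ) : bmp p ρ x = 0 := by
  simp only [bmp, ContinuousMap.coe_mk]
  rw [max_eq_left]
  have : (1:ℝ) ≤ dist x p / ρ := (one_le_div hρ).2 h
  linarith

lemma approx_lemma [SeparableSpace X] [Nonempty X] {q : ℕ → X} (hq : Dense (range q))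
    (P : Finset X) (f₀ : X → ℝ) {ε : ℝ} (hε : 0 < ε) :
    ∃ l : List (ℕ × ℚ × ℚ), ∀ x ∈ P, |bumpsum q l x - f₀ x| < ε := by
  classical
  -- minimum pairwise distance
  set m : ℝ := if h : P.offDiag.Nonempty then P.offDiag.inf' h (fun p => dist p.1 p.2) else 1
    with hm
  have hm0 : 0 < m := by
    rw [hm]
    split_ifs with h
    · rw [Finset.lt_inf'_iff]
      rintro ⟨a, b⟩ hab
      exact dist_pos.2 (Finset.mem_offDiag.1 hab).2.2
    · norm_num
  have hmle : ∀ x ∈ P, ∀ y ∈ P, x ≠ y → m ≤ dist x y := by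
    intro x hx y hy hxy
    have hmem : (x, y) ∈ P.offDiag := Finset.mem_offDiag.2 ⟨hx, hy, hxy⟩
    rw [hm]
    split_ifs with h
    · exact Finset.inf'_le (fun p => dist p.1 p.2) hmem
    · exact absurd ⟨(x, y), hmem⟩ h
  obtain ⟨ρ, hρ0, hρm⟩ : ∃ ρ : ℚ, 0 < (ρ:ℝ) ∧ (ρ:ℝ) < m / 3 := by
    obtain ⟨ρ, h1, h2⟩ := exists_rat_btwn (by linarith : (0:ℝ) < m / 3)
    exact ⟨ρ, h1, h2⟩
  -- rational approximations of the target values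
  have hv : ∀ x : X, ∃ v : ℚ, |(v:ℝ) - f₀ x| < ε / 2 := by
    intro x
    obtain ⟨v, h1, h2⟩ := exists_rat_btwn (by linarith : f₀ x - ε / 2 < f₀ x)
    exact ⟨v, by rw [abs_lt]; constructor <;> linarith⟩
  choose v hv using hv
  -- choose near points from the dense sequence
  have hi : ∀ x : X, ∃ i : ℕ, dist x (q i) < min (ρ:ℝ) ((ρ:ℝ) * ε / (2 * (|(v x : ℝ)| + 1))) := by
    intro x
    have hpos : 0 < min (ρ:ℝ) ((ρ:ℝ) * ε / (2 * (|(v x : ℝ)| + 1))) := by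
      apply lt_min hρ0
      apply div_pos (mul_pos hρ0 hε)
      positivity
    obtain ⟨z, hz⟩ := Metric.dense_iff.1 hq x _ hpos
    obtain ⟨i, rfl⟩ := hz.2
    exact ⟨i, by rw [dist_comm]; exact Metric.mem_ball.1 hz.1⟩
  choose idx hidx using hi
  refine ⟨P.toList.map fun x => (idx x, ρ, v x), ?_⟩
  intro x hx
  rw [bumpsum_apply, List.map_map]
  have : ((P.toList.map ((fun t : ℕ × ℚ × ℚ => (t.2.2 : ℝ) * bmp (q t.1) (t.2.1 : ℝ) x) ∘
      fun y => (idx y, ρ, v y))).sum)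
      = ∑ y ∈ P, (v y : ℝ) * bmp (q (idx y)) (ρ:ℝ) x := by
    exact Finset.sum_map_toList P ((fun t : ℕ × ℚ × ℚ => (t.2.2 : ℝ) * bmp (q t.1) (t.2.1 : ℝ) x) ∘ fun y => (idx y, ρ, v y))
  rw [this]
  rw [Finset.sum_eq_single x]
  · -- main term estimate
    have hdx := hidx x
    have hd1 : dist x (q (idx x)) < (ρ:ℝ) := lt_of_lt_of_le hdx (min_le_left _ _)
    have hd2 : dist x (q (idx x)) < (ρ:ℝ) * ε / (2 * (|(v x : ℝ)| + 1)) :=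
      lt_of_lt_of_le hdx (min_le_right _ _)
    have hbval : bmp (q (idx x)) (ρ:ℝ) x = 1 - dist x (q (idx x)) / (ρ:ℝ) := by
      simp only [bmp, ContinuousMap.coe_mk]
      rw [max_eq_right]
      have : dist x (q (idx x)) / (ρ:ℝ) < 1 := (div_lt_one hρ0).2 hd1
      linarith
    rw [hbval]
    have hθ : 0 ≤ dist x (q (idx x)) / (ρ:ℝ) := div_nonneg dist_nonneg hρ0.le
    have hθ2 : |(v x : ℝ)| * (dist x (q (idx x)) / (ρ:ℝ)) ≤ ε / 2 := by
      have hA : (0:ℝ) < 2 * (|(v x : ℝ)| + 1) := by positivity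
      have hd2' : dist x (q (idx x)) * (2 * (|(v x : ℝ)| + 1)) < (ρ:ℝ) * ε :=
        (lt_div_iff₀ hA).1 hd2
      have h3 : dist x (q (idx x)) / (ρ:ℝ) ≤ ε / (2 * (|(v x : ℝ)| + 1)) := by
        rw [div_le_div_iff₀ hρ0 hA]
        nlinarith
      calc |(v x : ℝ)| * (dist x (q (idx x)) / (ρ:ℝ))
          ≤ |(v x : ℝ)| * (ε / (2 * (|(v x : ℝ)| + 1))) := by
            apply mul_le_mul_of_nonneg_left h3 (abs_nonneg _)
        _ ≤ ε / 2 := by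
            rw [mul_div_assoc', div_le_div_iff₀ hA (by norm_num : (0:ℝ) < 2)]
            nlinarith [mul_nonneg hε.le (abs_nonneg ((v x : ℝ)))]
    calc |(v x : ℝ) * (1 - dist x (q (idx x)) / (ρ:ℝ)) - f₀ x|
        = |((v x : ℝ) - f₀ x) - (v x : ℝ) * (dist x (q (idx x)) / (ρ:ℝ))| := by ring_nf
      _ ≤ |(v x : ℝ) - f₀ x| + |(v x : ℝ) * (dist x (q (idx x)) / (ρ:ℝ))| := abs_sub _ _
      _ ≤ |(v x : ℝ) - f₀ x| + |(v x : ℝ)| * (dist x (q (idx x)) / (ρ:ℝ)) := by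
          rw [abs_mul, abs_of_nonneg hθ]
      _ < ε / 2 + ε / 2 := by
          have := hv x
          have := hθ2
          linarith [hv x]
      _ = ε := by ring
  · -- cross terms vanish
    intro y hy hyx
    have hdist : (ρ:ℝ) ≤ dist x (q (idx y)) := by
      have h1 : m ≤ dist x y := hmle x hx y hy (Ne.symm hyx)
      have h2 : dist y (q (idx y)) < (ρ:ℝ) := lt_of_lt_of_le (hidx y) (min_le_left _ _)
      have h3 := dist_triangle x (q (idx y)) y
      have h4 : dist (q (idx y)) y = dist y (q (idx y)) := dist_comm _ _
      linarith
    rw [bmp_eq_zero hdist hρ0, mul_zero]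
  · intro hxx
    exact absurd hx hxx

end bumps

section build
variable {X : Type*} [TopologicalSpace X]

noncomputable def buildFn (φ S : ℕ → C(X, ℝ)) (g : C(X, ℝ)) : List (ℕ × ℚ × ℚ) → C(X, ℝ)
  | [] => g
  | t :: l => buildFn φ S g l * (1 - φ t.1) +
      (ContinuousMap.const X (t.2.1 : ℝ) + ContinuousMap.const X (t.2.2 : ℝ) * S t.1) * φ t.1

lemma buildFn_eval_skip (φ S : ℕ → C(X, ℝ)) (g : C(X, ℝ)) (t : ℕ × ℚ × ℚ)
    (l : List (ℕ × ℚ × ℚ)) {x : X} (hx : φ t.1 x = 0) :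
    buildFn φ S g (t :: l) x = buildFn φ S g l x := by
  simp [buildFn, hx]

lemma buildFn_eval_head (φ S : ℕ → C(X, ℝ)) (g : C(X, ℝ)) (t : ℕ × ℚ × ℚ)
    (l : List (ℕ × ℚ × ℚ)) {x : X} (hx : φ t.1 x = 1) :
    buildFn φ S g (t :: l) x = (t.2.1 : ℝ) + (t.2.2 : ℝ) * S t.1 x := by
  simp [buildFn, hx]

lemma buildFn_eval_zero (φ S : ℕ → C(X, ℝ)) (g : C(X, ℝ)) (l : List (ℕ × ℚ × ℚ)) {x : X}
    (hx : ∀ t ∈ l, φ t.1 x = 0) : buildFn φ S g l x = g x := by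
  induction l with
  | nil => rfl
  | cons t l ih =>
      rw [buildFn_eval_skip φ S g t l (hx t List.mem_cons_self)]
      exact ih fun t' ht' => hx t' (List.mem_cons_of_mem t ht')

lemma buildFn_eval_mid (φ S : ℕ → C(X, ℝ)) (g : C(X, ℝ)) (l₁ l₂ : List (ℕ × ℚ × ℚ))
    (t : ℕ × ℚ × ℚ) {x : X} (h1 : ∀ t' ∈ l₁, φ t'.1 x = 0) (ht : φ t.1 x = 1) :
    buildFn φ S g (l₁ ++ t :: l₂) x = (t.2.1 : ℝ) + (t.2.2 : ℝ) * S t.1 x := by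
  induction l₁ with
  | nil => exact buildFn_eval_head φ S g t l₂ ht
  | cons t' l₁ ih =>
      rw [List.cons_append, buildFn_eval_skip φ S g t' _ (h1 t' List.mem_cons_self)]
      exact ih fun u hu => h1 u (List.mem_cons_of_mem t' hu)

end build

section choosepts
variable {X : Type*}

lemma exists_inj_points : ∀ (k : ℕ) (V : Fin k → Set X), (∀ i, (V i).Infinite) →
    ∀ A : Set X, A.Finite → ∃ z : Fin k → X, Function.Injective z ∧ ∀ i, z i ∈ V i \ A := by
  intro k
  induction k with
  | zero => exact fun V _ A _ => ⟨Fin.elim0, fun i => i.elim0, fun i => i.elim0⟩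
  | succ k ih =>
      intro V hV A hA
      obtain ⟨z', hz'inj, hz'mem⟩ := ih (fun i => V i.succ) (fun i => hV i.succ) A hA
      have hW : (V 0 \ (A ∪ range z')).Nonempty :=
        ((hV 0).diff (hA.union (finite_range z'))).nonempty
      obtain ⟨z0, hz0⟩ := hW
      refine ⟨Fin.cons z0 z', Fin.cons_injective_of_injective ?_ hz'inj, ?_⟩
      · exact fun hmem => hz0.2 (Or.inr hmem)
      · intro i
        refine Fin.cases ?_ ?_ i
        · simpa using ⟨hz0.1, fun h => hz0.2 (Or.inl h)⟩
        · intro j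
          simpa using hz'mem j

lemma exists_disjoint_basics [MetricSpace X] {b : ℕ → Set X}
    (hb : ∀ (x : X) (W : Set X), IsOpen W → x ∈ W → ∃ n, x ∈ b n ∧ b n ⊆ W)
    (k : ℕ) (V : Fin k → Set X) (hVo : ∀ i, IsOpen (V i)) (hVi : ∀ i, (V i).Infinite)
    (A : Set X) (hA : A.Finite) :
    ∃ n : Fin k → ℕ, (∀ i, (b (n i)).Nonempty ∧ b (n i) ⊆ V i ∧ b (n i) ∩ A = ∅) ∧
      ∀ i j, i ≠ j → Disjoint (b (n i)) (b (n j)) := by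
  classical
  obtain ⟨z, hzinj, hzmem⟩ := exists_inj_points k V hVi A hA
  set Dg : Finset (Fin k × Fin k) := Finset.univ.offDiag with hDg
  set m : ℝ := if h : Dg.Nonempty then Dg.inf' h (fun p => dist (z p.1) (z p.2)) else 1 with hm
  have hm0 : 0 < m := by
    rw [hm]
    split_ifs with h
    · rw [Finset.lt_inf'_iff]
      rintro ⟨i, j⟩ hij
      exact dist_pos.2 fun he => (Finset.mem_offDiag.1 hij).2.2 (hzinj he)
    · norm_num
  have hmle : ∀ i j : Fin k, i ≠ j → m ≤ dist (z i) (z j) := by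
    intro i j hij
    have hmem : (i, j) ∈ Dg := Finset.mem_offDiag.2 ⟨Finset.mem_univ _, Finset.mem_univ _, hij⟩
    rw [hm]
    split_ifs with h
    · exact Finset.inf'_le (fun p => dist (z p.1) (z p.2)) hmem
    · exact absurd ⟨(i, j), hmem⟩ h
  have hWopen : ∀ i, IsOpen ((V i ∩ Metric.ball (z i) (m/3)) \ A) :=
    fun i => ((hVo i).inter Metric.isOpen_ball).sdiff hA.isClosed
  have hWmem : ∀ i, z i ∈ (V i ∩ Metric.ball (z i) (m/3)) \ A :=
    fun i => ⟨⟨(hzmem i).1, Metric.mem_ball_self (by linarith)⟩, (hzmem i).2⟩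
  have hchoice : ∀ i, ∃ n, z i ∈ b n ∧ b n ⊆ (V i ∩ Metric.ball (z i) (m/3)) \ A :=
    fun i => hb (z i) _ (hWopen i) (hWmem i)
  choose n hn1 hn2 using hchoice
  refine ⟨n, fun i => ⟨⟨z i, hn1 i⟩, fun x hx => ((hn2 i hx).1).1, ?_⟩, ?_⟩
  · rw [eq_empty_iff_forall_notMem]
    rintro x ⟨hx1, hx2⟩
    exact (hn2 i hx1).2 hx2
  · intro i j hij
    rw [Set.disjoint_left]
    intro x hxi hxj
    have h1 : dist x (z i) < m / 3 := Metric.mem_ball.1 ((hn2 i hxi).1).2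
    have h2 : dist x (z j) < m / 3 := Metric.mem_ball.1 ((hn2 j hxj).1).2
    have h3 := hmle i j hij
    have h4 := dist_triangle (z i) x (z j)
    rw [dist_comm (z i) x] at h4
    linarith
end choosepts


lemma backward_main (hM : HypothesisM) {X : Type*} [MetricSpace X] [SeparableSpace X]
    [Nonempty X] (hcard : ∀ U : Set X, IsOpen U → U.Nonempty → Cardinal.continuum ≤ #U) :
    @SeparableSpace C(X, ℝ) (biPointOpenTopology X) := by
  classical
  haveI : SecondCountableTopology X := UniformSpace.secondCountable_of_separable X
  obtain ⟨bset, hbc, hbne, hbbasis⟩ := exists_countable_basis X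
  -- bset is nonempty
  obtain ⟨x00⟩ := ‹Nonempty X›
  obtain ⟨W0, hW0b, hW0x, _⟩ := hbbasis.exists_subset_of_mem_open (mem_univ x00) isOpen_univ
  obtain ⟨B, hBr⟩ := hbc.exists_eq_range ⟨W0, hW0b⟩
  have hBopen : ∀ n, IsOpen (B n) := fun n => hbbasis.isOpen (hBr ▸ mem_range_self n)
  have hb : ∀ (x : X) (W : Set X), IsOpen W → x ∈ W → ∃ n, x ∈ B n ∧ B n ⊆ W := by
    intro x W hW hx
    obtain ⟨v, hv, hxv, hvW⟩ := hbbasis.exists_subset_of_mem_open hx hW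
    rw [hBr] at hv
    obtain ⟨n, rfl⟩ := hv
    exact ⟨n, hxv, hvW⟩
  -- bump data for each basic open set
  have hdata : ∀ n, ∃ (φ Sf : C(X, ℝ)) (C O : Set X), C ⊆ O ∧ O ⊆ B n ∧
      (∀ x ∈ C, φ x = 1) ∧ (∀ x ∉ O, φ x = 0) ∧
      ((B n).Nonempty → Icc (0:ℝ) 1 ⊆ Sf '' C) := by
    intro n
    by_cases h : (B n).Nonempty
    · obtain ⟨φ, Sf, C, O, h1, h2, _, h4, h5, h6⟩ := bump_data hM hcard (B n) (hBopen n) h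
      exact ⟨φ, Sf, C, O, h1, h2, h4, h5, fun _ => h6⟩
    · exact ⟨0, 0, ∅, ∅, subset_rfl, empty_subset _, fun x hx => absurd hx (notMem_empty x),
        fun x _ => rfl, fun hne => absurd hne h⟩
  choose φf Sf Cs Os hCO hOB hφ1 hφ0 hIcc using hdata
  -- dense sequence
  obtain ⟨Q, hQc, hQd⟩ := TopologicalSpace.exists_countable_dense X
  obtain ⟨q, hqr⟩ := hQc.exists_eq_range hQd.nonempty
  have hqd : Dense (range q) := hqr ▸ hQd
  -- the countable candidate set
  set D : Set C(X, ℝ) :=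
    range (fun p : List (ℕ × ℚ × ℚ) × List (ℕ × ℚ × ℚ) => buildFn φf Sf (bumpsum q p.1) p.2)
    with hD
  suffices hdense : @Dense C(X, ℝ) (biPointOpenTopology X) D by
    exact @SeparableSpace.mk C(X, ℝ) (biPointOpenTopology X) ⟨D, countable_range _, hdense⟩
  -- density via the subbasis
  have hbasis2 := @TopologicalSpace.isTopologicalBasis_of_subbasis C(X, ℝ)
    (biPointOpenTopology X) _ rfl
  rw [@TopologicalSpace.IsTopologicalBasis.dense_iff C(X, ℝ) (biPointOpenTopology X) _ hbasis2]
  rintro o ⟨F, ⟨hFfin, hFsub⟩, rfl⟩ ⟨f₀, hf₀⟩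
  -- split the subbasic sets
  set Pcl : Set (Set C(X, ℝ)) :=
    {S | ∃ (x : X) (U : Set ℝ), IsOpen U ∧ S = {f : C(X, ℝ) | f x ∈ U}} with hPcl
  -- choice for point-open data
  have hPex : ∀ T : Set C(X, ℝ), ∃ (x : X) (U : Set ℝ),
      T ∈ Pcl → (IsOpen U ∧ T = {f : C(X, ℝ) | f x ∈ U}) := by
    intro T
    by_cases h : T ∈ Pcl
    · obtain ⟨x, U, hU, hT⟩ := h
      exact ⟨x, U, fun _ => ⟨hU, hT⟩⟩
    · exact ⟨x00, ∅, fun hmem => absurd hmem h⟩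
  choose xpt Uop hPU using hPex
  set FpS : Set (Set C(X, ℝ)) := {T ∈ F | T ∈ Pcl} with hFpS
  set FhS : Set (Set C(X, ℝ)) := {T ∈ F | T ∉ Pcl} with hFhS
  have hFpfin : FpS.Finite := hFfin.subset (sep_subset _ _)
  have hFhfin : FhS.Finite := hFfin.subset (sep_subset _ _)
  -- enumerate FhS
  obtain ⟨k, Tf, hTfinj, hTfr⟩ := hFhfin.fin_param
  -- h-data for each i
  have hHex : ∀ i : Fin k, ∃ (V : Set X) (r : ℝ), IsOpen V ∧
      Tf i = {f : C(X, ℝ) | ∃ x ∈ V, f x = r} := by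
    intro i
    have hmem : Tf i ∈ FhS := hTfr ▸ mem_range_self i
    have h2 := hFsub hmem.1
    rcases h2 with h2 | h2
    · exact absurd h2 hmem.2
    · exact h2
  choose Vf rf hVo hTeq using hHex
  have hf₀T : ∀ T ∈ F, f₀ ∈ T := fun T hT => hf₀ T hT
  have hVne : ∀ i, (Vf i).Nonempty := by
    intro i
    have : f₀ ∈ Tf i := hf₀T _ ((hTfr ▸ mem_range_self i : Tf i ∈ FhS)).1
    rw [hTeq i] at this
    obtain ⟨x, hx, _⟩ := this
    exact ⟨x, hx⟩
  have hVinf : ∀ i, (Vf i).Infinite := by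
    intro i
    exact Set.infinite_coe_iff.1 (Cardinal.infinite_iff.2
      (le_trans Cardinal.aleph0_le_continuum (hcard _ (hVo i) (hVne i))))
  -- the finite point set to avoid
  set A : Set X := xpt '' FpS with hA
  have hAfin : A.Finite := hFpfin.image _
  -- epsilon for the point part
  have hepsex : ∀ T : Set C(X, ℝ), ∃ ε : ℝ, 0 < ε ∧
      (T ∈ FpS → Metric.ball (f₀ (xpt T)) ε ⊆ Uop T) := by
    intro T
    by_cases h : T ∈ FpS
    · have hT := (hPU T h.2).2
      have hU := (hPU T h.2).1
      have : f₀ ∈ T := hf₀T T h.1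
      rw [hT] at this
      obtain ⟨ε, hε, hball⟩ := Metric.isOpen_iff.1 hU _ this
      exact ⟨ε, hε, fun _ => hball⟩
    · exact ⟨1, one_pos, fun hmem => absurd hmem h⟩
  choose epsf heps1 heps2 using hepsex
  set FpF : Finset (Set C(X, ℝ)) := hFpfin.toFinset with hFpF
  set ε : ℝ := if h : FpF.Nonempty then FpF.inf' h epsf else 1 with hε
  have hε0 : 0 < ε := by
    rw [hε]
    split_ifs with h
    · rw [Finset.lt_inf'_iff]
      exact fun T _ => heps1 T
    · norm_num
  have hεle : ∀ T ∈ FpS, ε ≤ epsf T := by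
    intro T hT
    have hmem : T ∈ FpF := hFpfin.mem_toFinset.2 hT
    rw [hε, dif_pos ⟨T, hmem⟩]
    exact Finset.inf'_le _ hmem
  -- the point part approximation
  set P : Finset X := FpF.image xpt with hP
  obtain ⟨l₁, hl₁⟩ := approx_lemma hqd P f₀ hε0
  set g : C(X, ℝ) := bumpsum q l₁ with hg
  -- disjoint basic sets inside the V i
  obtain ⟨nf, hnf1, hnf2⟩ := exists_disjoint_basics hb k Vf hVo hVinf A hAfin
  -- rational coefficients
  have haex : ∀ i : Fin k, ∃ a : ℚ, rf i - 1 < (a:ℝ) ∧ (a:ℝ) < rf i := by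
    intro i
    obtain ⟨a, h1, h2⟩ := exists_rat_btwn (by linarith : rf i - 1 < rf i)
    exact ⟨a, h1, h2⟩
  choose af haf1 haf2 using haex
  set L₂ : List (ℕ × ℚ × ℚ) := (List.finRange k).map (fun i => (nf i, af i, 2)) with hL₂
  set f : C(X, ℝ) := buildFn φf Sf g L₂ with hf
  refine ⟨f, ?_, ⟨(l₁, L₂), rfl⟩⟩
  -- f belongs to every member of F
  rw [mem_sInter]
  intro T hT
  by_cases hTP : T ∈ Pcl
  · -- point-open sets
    have hTFp : T ∈ FpS := ⟨hT, hTP⟩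
    have hxA : xpt T ∈ A := mem_image_of_mem _ hTFp
    have hfg : f (xpt T) = g (xpt T) := by
      rw [hf]
      apply buildFn_eval_zero
      rintro t ht
      rw [hL₂, List.mem_map] at ht
      obtain ⟨j, hj, rfl⟩ := ht
      have hBA : B (nf j) ∩ A = ∅ := (hnf1 j).2.2
      have hxnB : xpt T ∉ B (nf j) := fun hmem =>
        (eq_empty_iff_forall_notMem.1 hBA (xpt T)) ⟨hmem, hxA⟩
      exact hφ0 (nf j) _ (fun hmem => hxnB (hOB (nf j) hmem))
    have hxP : xpt T ∈ P := by
      rw [hP]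
      exact Finset.mem_image_of_mem _ (hFpfin.mem_toFinset.2 hTFp)
    have happrox := hl₁ (xpt T) hxP
    rw [(hPU T hTP).2]
    show f (xpt T) ∈ Uop T
    rw [hfg]
    apply heps2 T hTFp
    rw [Metric.mem_ball, Real.dist_eq]
    exact lt_of_lt_of_le happrox (hεle T hTFp)
  · -- open-point sets
    have hTFh : T ∈ FhS := ⟨hT, hTP⟩
    rw [← hTfr] at hTFh
    obtain ⟨i, rfl⟩ := hTFh
    -- find x in Cs (nf i) hitting the right value
    have hBne : (B (nf i)).Nonempty := (hnf1 i).1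
    have hval : (rf i - af i) / 2 ∈ Icc (0:ℝ) 1 := by
      constructor
      · have := haf2 i; linarith
      · have := haf1 i; linarith
    obtain ⟨x, hxC, hxval⟩ := hIcc (nf i) hBne hval
    have hxO : x ∈ Os (nf i) := hCO (nf i) hxC
    have hxB : x ∈ B (nf i) := hOB (nf i) hxO
    have hφx : φf (nf i) x = 1 := hφ1 (nf i) x hxC
    -- decompose the list
    obtain ⟨l₁', l₂', hsplit⟩ := List.append_of_mem (List.mem_finRange i)
    have hnodup : (List.finRange k).Nodup := List.nodup_finRange k
    rw [hsplit] at hnodup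
    have hinotl₁ : i ∉ l₁' := by
      intro hmem
      have := (List.nodup_append.1 hnodup).2.2
      exact this i hmem i List.mem_cons_self rfl
    have hfx : f x = (af i : ℝ) + 2 * Sf (nf i) x := by
      rw [hf, hL₂, hsplit, List.map_append, List.map_cons]
      have := buildFn_eval_mid φf Sf g (l₁'.map fun j => (nf j, af j, 2))
        (l₂'.map fun j => (nf j, af j, 2)) (nf i, af i, 2) (x := x) ?_ hφx
      · simpa using this
      · rintro t' ht'
        rw [List.mem_map] at ht'
        obtain ⟨j, hj, rfl⟩ := ht'
        have hji : j ≠ i := fun h => hinotl₁ (h ▸ hj)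
        have hdisj := hnf2 i j (fun h => hji h.symm)
        have hxnotBj : x ∉ B (nf j) := fun hmem => (Set.disjoint_left.1 hdisj hxB) hmem
        exact hφ0 (nf j) x (fun hmem => hxnotBj (hOB (nf j) hmem))
    rw [hTeq i]
    refine ⟨x, ?_, ?_⟩
    · exact ((hnf1 i).2.1) hxB
    · rw [hfx, hxval]; ring

/-- Under hypothesis (M), for a nonempty separable metrizable space `X`,
`C_ph(X)` is separable iff `Δ(X) = 𝔠`. -/

theorem stmt14 (hM : HypothesisM) {X : Type*} [TopologicalSpace X] [MetrizableSpace X]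
    [SeparableSpace X] [Nonempty X] :
    @SeparableSpace C(X, ℝ) (biPointOpenTopology X) ↔
      dispersionCharacter X = Cardinal.continuum := by
  constructor
  · intro hsep
    letI : MetricSpace X := TopologicalSpace.metrizableSpaceMetric X
    haveI : SecondCountableTopology X := UniformSpace.secondCountable_of_separable X
    exact dispersion_eq_continuum mk_le_continuum_of_t0_secondCountable (forward_card hsep)
  · intro hd
    letI : MetricSpace X := TopologicalSpace.metrizableSpaceMetric X
    haveI : SecondCountableTopology X := UniformSpace.secondCountable_of_separable X
    have hle : #X ≤ Cardinal.continuum := mk_le_continuum_of_t0_secondCountable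
    have hcard : ∀ U : Set X, IsOpen U → U.Nonempty → Cardinal.continuum ≤ #U := by
      intro U hU hne
      rw [card_open_of_dispersion hle hd U hU hne]
    exact backward_main hM hcard
end
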